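/- arXiv:1612.01464 — 3 statements merged into one kernel-verified Lean document; each statement's English description precedes it below -/
import Mathlib

section
/- Let A := ℂ^{d_A} and K := ℂ^{d_K} with d_A, d_K ∈ ℕ, and let ρ be a faithful state on K (a positive definite d_K×d_K complex matrix of trace 1). For each n ∈ ℕ, let E_{n*} : M_{d_K}(ℂ) → M_{d_A}(ℂ) ⊗ M_{d_K}(ℂ) be a linear map that is completely positive and trace preserving, and assume Tr_A[E_{n*}(ρ)] = ρ for every n. Define τ_1 := E_{1*}(ρ), τ_n := (id_{M_{d_A}(ℂ)^{⊗(n−1)}} ⊗ E_{n*})(τ_{n−1}) for n ≥ 2, ρ_n := Tr_K[τ_n] (a state on A^{⊗n}), and ρ̃_n := Tr_K[E_{n*}(ρ)] (a state on A). Then there exists R > 1 such that ρ_n ≤ R·ρ_{n−1} ⊗ ρ̃_n in the Loewner order for every n ≥ 2. -/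
open Matrix MeasureTheory
open scoped ComplexOrder

noncomputable section

namespace QHT

variable {ι : Type*} [Fintype ι] [DecidableEq ι]

/- Functional calculus for (Hermitian) matrices, via the spectral theorem.
Junk value `0` if the matrix is not Hermitian. -/
noncomputable def matFun (f : ℝ → ℝ) (A : Matrix ι ι ℂ) : Matrix ι ι ℂ :=
  if hA : A.IsHermitian then
    (hA.eigenvectorUnitary : Matrix ι ι ℂ) *
      Matrix.diagonal (fun i => (f (hA.eigenvalues i) : ℂ)) *
      star (hA.eigenvectorUnitary : Matrix ι ι ℂ)
  else 0

/-- Matrix logarithm (of a Hermitian matrix). -/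
noncomputable def matLog (A : Matrix ι ι ℂ) : Matrix ι ι ℂ := matFun Real.log A

/-- Matrix square root (of a Hermitian matrix). -/
noncomputable def matSqrt (A : Matrix ι ι ℂ) : Matrix ι ι ℂ := matFun Real.sqrt A

/-- Quantum relative entropy `D(ρ‖σ) = Tr[ρ (log ρ - log σ)]`. -/
noncomputable def relEntropy (ρ σ : Matrix ι ι ℂ) : ℝ :=
  ((ρ * (matLog ρ - matLog σ)).trace).re

/-- Quantum information variance `V(ρ‖σ) = Tr[ρ (log ρ - log σ)²] - D(ρ‖σ)²`. -/
noncomputable def relVar (ρ σ : Matrix ι ι ℂ) : ℝ :=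
  ((ρ * ((matLog ρ - matLog σ) * (matLog ρ - matLog σ))).trace).re - (relEntropy ρ σ) ^ 2

/-- A state: positive semidefinite with trace one. -/
def IsState (ρ : Matrix ι ι ℂ) : Prop := ρ.PosSemidef ∧ ρ.trace = 1

/-- A faithful state: positive definite with trace one. -/
def IsFaithfulState (ρ : Matrix ι ι ℂ) : Prop := ρ.PosDef ∧ ρ.trace = 1

/-- A test: an operator `T` with `0 ≤ T ≤ I`. -/
def IsTest (T : Matrix ι ι ℂ) : Prop := T.PosSemidef ∧ (1 - T).PosSemidef

/-- Type I error `α(T) = Tr[(I - T) ρ]`. -/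
noncomputable def typeI (ρ T : Matrix ι ι ℂ) : ℝ := ((ρ * (1 - T)).trace).re

/-- Type II error `β(T) = Tr[T σ]`. -/
noncomputable def typeII (σ T : Matrix ι ι ℂ) : ℝ := ((σ * T).trace).re

/-- Optimal type II (Stein) error under the constraint `α(T) ≤ ε`. -/
noncomputable def steinErr (ρ σ : Matrix ι ι ℂ) (ε : ℝ) : ℝ :=
  sInf {b : ℝ | ∃ T : Matrix ι ι ℂ, IsTest T ∧ typeI ρ T ≤ ε ∧ typeII σ T = b}

/-- The ε-hypothesis testing relative entropy. -/
noncomputable def DH (ρ σ : Matrix ι ι ℂ) (ε : ℝ) : ℝ := - Real.log (steinErr ρ σ ε)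

/- `‖log Δ_{σ|ρ} + D(ρ‖σ) id‖`, i.e. the maximum of
`|log μ - log λ + D(ρ‖σ)|` over eigenvalues `λ` of `ρ` and `μ` of `σ`. -/
open Classical in
noncomputable def shiftNorm (ρ σ : Matrix ι ι ℂ) : ℝ :=
  if h : ρ.IsHermitian ∧ σ.IsHermitian then
    ⨆ i : ι, ⨆ j : ι,
      |Real.log (h.2.eigenvalues j) - Real.log (h.1.eigenvalues i) + relEntropy ρ σ|
  else 0

/- Largest eigenvalue of a Hermitian matrix. -/
open Classical in
noncomputable def lamMax (A : Matrix ι ι ℂ) : ℝ :=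
  if hA : A.IsHermitian then ⨆ i : ι, hA.eigenvalues i else 0

/- Smallest eigenvalue of a Hermitian matrix. -/
open Classical in
noncomputable def lamMin (A : Matrix ι ι ℂ) : ℝ :=
  if hA : A.IsHermitian then ⨅ i : ι, hA.eigenvalues i else 0

/- The Loewner order: `A ≤ B` iff `B - A` is positive semidefinite. -/
def loewnerLE {κ : Type*} [Fintype κ] (A B : Matrix κ κ ℂ) : Prop := (B - A).PosSemidef

/-- Splitting off the last tensor factor: `(Fin (n+1) → X) ≃ (Fin n → X) × X`. -/
def splitLast (X : Type*) (n : ℕ) : (Fin (n + 1) → X) ≃ (Fin n → X) × X where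
  toFun f := (fun i => f i.castSucc, f (Fin.last n))
  invFun p := Fin.snoc p.1 p.2
  left_inv f := by
    funext i
    induction i using Fin.lastCases with
    | last => simp
    | cast i => simp
  right_inv p := by
    refine Prod.ext ?_ ?_
    · funext i; simp
    · simp

/-- The tensor product `A ⊗ B` of a state on `H^{⊗(n+1)}` with a state on `H`, viewed as a
state on `H^{⊗(n+2)}`. -/
noncomputable def tensorExt {d n : ℕ}
    (A : Matrix (Fin (n + 1) → Fin d) (Fin (n + 1) → Fin d) ℂ)
    (B : Matrix (Fin d) (Fin d) ℂ) :
    Matrix (Fin (n + 2) → Fin d) (Fin (n + 2) → Fin d) ℂ :=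
  Matrix.reindex (splitLast (Fin d) (n + 1)).symm (splitLast (Fin d) (n + 1)).symm
    (Matrix.kroneckerMap (· * ·) A B)

/-- The canonical identification `H^{⊗1} ≅ H` applied to a matrix. -/
noncomputable def asOne {d : ℕ} (A : Matrix (Fin 1 → Fin d) (Fin 1 → Fin d) ℂ) :
    Matrix (Fin d) (Fin d) ℂ :=
  Matrix.reindex (Equiv.funUnique (Fin 1) (Fin d)) (Equiv.funUnique (Fin 1) (Fin d)) A

/-- The canonical identification `H ≅ H^{⊗1}` applied to a matrix. -/
noncomputable def toOne {d : ℕ} (A : Matrix (Fin d) (Fin d) ℂ) :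
    Matrix (Fin 1 → Fin d) (Fin 1 → Fin d) ℂ :=
  Matrix.reindex (Equiv.funUnique (Fin 1) (Fin d)).symm (Equiv.funUnique (Fin 1) (Fin d)).symm A

/-- Tensor product `A 0 ⊗ A 1 ⊗ ⋯ ⊗ A (n-1)` of a family of matrices. -/
noncomputable def tensorFamily {dm : ℕ → ℕ} (n : ℕ)
    (A : (k : ℕ) → Matrix (Fin (dm k)) (Fin (dm k)) ℂ) :
    Matrix ((k : Fin n) → Fin (dm k)) ((k : Fin n) → Fin (dm k)) ℂ :=
  Matrix.of fun a b => ∏ k : Fin n, A k.1 (a k) (b k)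

/-- Rank-one spectral projection onto the `i`-th eigenvector of a Hermitian matrix. -/
noncomputable def eigProj {A : Matrix ι ι ℂ} (hA : A.IsHermitian) (i : ι) : Matrix ι ι ℂ :=
  Matrix.of fun a b =>
    (hA.eigenvectorUnitary : Matrix ι ι ℂ) a i * star ((hA.eigenvectorUnitary : Matrix ι ι ℂ) b i)

/- The mass `μ_{σ|ρ}(S)` of a set `S ⊆ ℝ` under the spectral measure of
`log Δ_{σ|ρ}` w.r.t. `Ω_ρ = ρ^{1/2}`:
`Σ Tr[P_μ(σ) ρ^{1/2} P_λ(ρ) ρ^{1/2}]` over eigenvalue pairs with `log μ - log λ ∈ S`. -/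
open Classical in
noncomputable def specMassSet (ρ σ : Matrix ι ι ℂ) (S : Set ℝ) : ℝ :=
  if h : ρ.IsHermitian ∧ σ.IsHermitian then
    ∑ i : ι, ∑ j : ι,
      if Real.log (h.2.eigenvalues j) - Real.log (h.1.eigenvalues i) ∈ S then
        ((eigProj h.2 j * matSqrt ρ * eigProj h.1 i * matSqrt ρ).trace).re
      else 0
  else 0

/- The spectral measure `μ_{σ|ρ}` of `log Δ_{σ|ρ}` with respect to `Ω_ρ = ρ^{1/2}`,
as a measure on `ℝ`. -/
open Classical in
noncomputable def specMeasure (ρ σ : Matrix ι ι ℂ) : Measure ℝ :=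
  if h : ρ.IsHermitian ∧ σ.IsHermitian then
    ∑ i : ι, ∑ j : ι,
      (ENNReal.ofReal (((eigProj h.2 j * matSqrt ρ * eigProj h.1 i * matSqrt ρ).trace).re)) •
        Measure.dirac (Real.log (h.2.eigenvalues j) - Real.log (h.1.eigenvalues i))
  else 0

/-- Binary relative entropy. -/
noncomputable def Dbin (p q : ℝ) : ℝ :=
  p * Real.log (p / q) + (1 - p) * Real.log ((1 - p) / (1 - q))

section Channels

variable {ι : Type*} [Fintype ι] [DecidableEq ι]
variable {X : Type*} [Fintype X] [DecidableEq X]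

/-- A POVM with `M` outcomes. -/
def IsPOVM {M : ℕ} (T : Fin M → Matrix ι ι ℂ) : Prop :=
  (∀ k, (T k).PosSemidef) ∧ ∑ k, T k = 1

/-- Average success probability of a code for a classical-quantum channel. -/
noncomputable def avgSuccess {M : ℕ} (W : X → Matrix ι ι ℂ)
    (x : Fin M → X) (T : Fin M → Matrix ι ι ℂ) : ℝ :=
  (1 / M : ℝ) * ∑ k, ((W (x k) * T k).trace).re

/-- Existence of a code of size `M` with average error at most `ε`. -/
def IsCode (W : X → Matrix ι ι ℂ) (M : ℕ) (ε : ℝ) : Prop :=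
  ∃ (x : Fin M → X) (T : Fin M → Matrix ι ι ℂ), IsPOVM T ∧ 1 - ε ≤ avgSuccess W x T

/-- One-shot ε-error capacity `C(W, ε) = log M*(W, ε)`. -/
noncomputable def capacity (W : X → Matrix ι ι ℂ) (ε : ℝ) : ℝ :=
  Real.log ((sSup {M : ℕ | IsCode W M ε} : ℕ) : ℝ)

/-- The average output state `W(p) = Σ_x p(x) W(x)`. -/
noncomputable def mix (W : X → Matrix ι ι ℂ) (p : X → ℝ) : Matrix ι ι ℂ :=
  ∑ x, (p x : ℂ) • W x

/-- The Holevo capacity `χ*(W) = sup_p Σ_x p(x) D(W(x)‖W(p))`. -/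
noncomputable def holevoCap (W : X → Matrix ι ι ℂ) : ℝ :=
  sSup {v : ℝ | ∃ p : X → ℝ, (∀ x, 0 ≤ p x) ∧ ∑ x, p x = 1 ∧
    v = ∑ x, p x * relEntropy (W x) (mix W p)}

/-- A probability mass function achieving the Holevo capacity. -/
def IsMaximizer (W : X → Matrix ι ι ℂ) (p : X → ℝ) : Prop :=
  (∀ x, 0 ≤ p x) ∧ ∑ x, p x = 1 ∧
    ∑ x, p x * relEntropy (W x) (mix W p) = holevoCap W

/-- The lifted state `ρ_p = Σ_x p(x) |x⟩⟨x| ⊗ W(x)`. -/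
noncomputable def liftRho (W : X → Matrix ι ι ℂ) (p : X → ℝ) : Matrix (X × ι) (X × ι) ℂ :=
  Matrix.of fun a b => if a.1 = b.1 then (p a.1 : ℂ) * W a.1 a.2 b.2 else 0

/-- The lifted state `σ_p = Σ_x p(x) |x⟩⟨x| ⊗ W(p)`. -/
noncomputable def liftSigma (W : X → Matrix ι ι ℂ) (p : X → ℝ) : Matrix (X × ι) (X × ι) ℂ :=
  Matrix.of fun a b => if a.1 = b.1 then (p a.1 : ℂ) * (mix W p) a.2 b.2 else 0

/-- The memoryless product channel `W^{⊗n}`. -/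
noncomputable def prodChannel {d : ℕ} (W : X → Matrix (Fin d) (Fin d) ℂ) (n : ℕ) :
    (Fin n → X) → Matrix (Fin n → Fin d) (Fin n → Fin d) ℂ :=
  fun x => Matrix.of fun a b => ∏ k, W (x k) (a k) (b k)

/-- The single-letter channel `W_1 : X → D(H)` underlying a channel family with memory. -/
noncomputable def chan1 {d : ℕ}
    (W : (n : ℕ) → (Fin (n + 1) → X) → Matrix (Fin (n + 1) → Fin d) (Fin (n + 1) → Fin d) ℂ) :
    X → Matrix (Fin d) (Fin d) ℂ :=
  fun x => asOne (W 0 (fun _ => x))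

end Channels

section CPmaps

/-- Amplification `id_F ⊗ Ψ` of a map `Ψ` on matrix algebras, acting blockwise. -/
noncomputable def ampl {F I J : Type*} [Fintype F] [Fintype I] [Fintype J]
    (Ψ : Matrix I I ℂ → Matrix J J ℂ) (M : Matrix (F × I) (F × I) ℂ) :
    Matrix (F × J) (F × J) ℂ :=
  Matrix.of fun p q => Ψ (Matrix.of fun a b => M (p.1, a) (q.1, b)) p.2 q.2

/-- Complete positivity of a map between matrix algebras. -/
def IsCP {I J : Type*} [Fintype I] [Fintype J]
    (Ψ : Matrix I I ℂ → Matrix J J ℂ) : Prop :=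
  ∀ (m : ℕ) (M : Matrix (Fin m × I) (Fin m × I) ℂ), M.PosSemidef → (ampl Ψ M).PosSemidef

/-- Trace preservation of a map between matrix algebras. -/
def IsTP {I J : Type*} [Fintype I] [Fintype J]
    (Ψ : Matrix I I ℂ → Matrix J J ℂ) : Prop :=
  ∀ x, (Ψ x).trace = x.trace

/-- Partial trace over the second tensor factor. -/
noncomputable def ptraceSnd {I K : Type*} [Fintype K] (M : Matrix (I × K) (I × K) ℂ) :
    Matrix I I ℂ :=
  Matrix.of fun a b => ∑ k, M (a, k) (b, k)

/-- Partial trace over the first tensor factor. -/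
noncomputable def ptraceFst {I K : Type*} [Fintype I] (M : Matrix (I × K) (I × K) ℂ) :
    Matrix K K ℂ :=
  Matrix.of fun i j => ∑ a, M (a, i) (a, j)

/-- Reindexing `A ⊗ K ≅ A^{⊗1} ⊗ K`. -/
def tauEquiv0 (dA dK : ℕ) : (Fin dA × Fin dK) ≃ ((Fin 1 → Fin dA) × Fin dK) :=
  Equiv.prodCongr (Equiv.funUnique (Fin 1) (Fin dA)).symm (Equiv.refl (Fin dK))

/-- Reindexing `A^{⊗(n+1)} ⊗ (A ⊗ K) ≅ A^{⊗(n+2)} ⊗ K`. -/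
def tauEquivS (dA dK n : ℕ) :
    ((Fin (n + 1) → Fin dA) × (Fin dA × Fin dK)) ≃ ((Fin (n + 2) → Fin dA) × Fin dK) :=
  (Equiv.prodAssoc (Fin (n + 1) → Fin dA) (Fin dA) (Fin dK)).symm.trans
    (Equiv.prodCongr (splitLast (Fin dA) (n + 1)).symm (Equiv.refl (Fin dK)))

/-- The states `τ_n` generated by a family of CPTP maps `E_n` and an initial state `ρ`:
`τ_1 = E_{1*}(ρ)`, `τ_{n+1} = (id^{⊗n} ⊗ E_{(n+1)*})(τ_n)` (here `fcsTau E ρ n` is `τ_{n+1}`). -/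
noncomputable def fcsTau {dA dK : ℕ}
    (E : ℕ → Matrix (Fin dK) (Fin dK) ℂ →ₗ[ℂ] Matrix (Fin dA × Fin dK) (Fin dA × Fin dK) ℂ)
    (ρ : Matrix (Fin dK) (Fin dK) ℂ) :
    (n : ℕ) → Matrix ((Fin (n + 1) → Fin dA) × Fin dK) ((Fin (n + 1) → Fin dA) × Fin dK) ℂ
  | 0 => Matrix.reindex (tauEquiv0 dA dK) (tauEquiv0 dA dK) (E 0 ρ)
  | n + 1 => Matrix.reindex (tauEquivS dA dK n) (tauEquivS dA dK n)
      (ampl (E (n + 1)) (fcsTau E ρ n))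

end CPmaps

section Aux
open Kronecker

variable {F K I J : Type*}

lemma star_dot_self_eq [Fintype I] (v : I → ℂ) :
    star v ⬝ᵥ v = ((∑ i, ‖v i‖ ^ 2 : ℝ) : ℂ) := by
  push_cast
  simp only [dotProduct, Pi.star_apply, Complex.star_def]
  refine Finset.sum_congr rfl fun i _ => ?_
  rw [mul_comm, Complex.mul_conj, Complex.normSq_eq_norm_sq]
  norm_cast

lemma dot_mulVec_eq [Fintype I] (N : Matrix I I ℂ) (x : I → ℂ) :
    star x ⬝ᵥ (N *ᵥ x) = ∑ a, ∑ b, star (x a) * N a b * x b := by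
  simp [dotProduct, Matrix.mulVec, Finset.mul_sum, mul_assoc]

lemma psd_smul_coe [Fintype I] {X : Matrix I I ℂ} (hX : X.PosSemidef) {r : ℝ} (hr : 0 ≤ r) :
    ((r : ℂ) • X).PosSemidef := by
  refine Matrix.PosSemidef.of_dotProduct_mulVec_nonneg ?_ ?_
  · have := hX.1
    unfold Matrix.IsHermitian at *
    rw [Matrix.conjTranspose_smul, this]
    congr 1
    simp [Complex.star_def, Complex.conj_ofReal]
  · intro x
    rw [Matrix.smul_mulVec, dotProduct_smul]
    have h0 : (0:ℂ) ≤ (r:ℂ) := by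
      rw [Complex.zero_le_real]; exact hr
    exact mul_nonneg h0 (hX.dotProduct_mulVec_nonneg x)

open scoped MatrixOrder Matrix.Norms.L2Operator in
lemma psd_eq_ct_mul_self {n : Type*} [Fintype n] {A : Matrix n n ℂ} (hA : A.PosSemidef) :
    ∃ B : Matrix n n ℂ, A = Bᴴ * B := by
  classical
  obtain ⟨B, hB⟩ := CStarAlgebra.nonneg_iff_eq_star_mul_self.mp hA.nonneg
  exact ⟨B, hB⟩

lemma kronecker_posSemidef [Fintype F] [Fintype K] {A : Matrix F F ℂ} {B : Matrix K K ℂ}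
    (hA : A.PosSemidef) (hB : B.PosSemidef) :
    (Matrix.kroneckerMap (· * ·) A B).PosSemidef := by
  obtain ⟨A₁, rfl⟩ := psd_eq_ct_mul_self hA
  obtain ⟨B₁, rfl⟩ := psd_eq_ct_mul_self hB
  have h : Matrix.kroneckerMap (· * ·) (A₁ᴴ * A₁) (B₁ᴴ * B₁)
      = (Matrix.kroneckerMap (· * ·) A₁ B₁)ᴴ * Matrix.kroneckerMap (· * ·) A₁ B₁ := by
    ext ⟨p, a⟩ ⟨q, b⟩
    simp only [Matrix.mul_apply, Matrix.conjTranspose_apply, Matrix.kroneckerMap_apply,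
      Fintype.sum_prod_type, star_mul']
    rw [Finset.sum_mul_sum]
    refine Finset.sum_congr rfl fun i _ => Finset.sum_congr rfl fun j _ => ?_
    ring
  rw [h]
  exact Matrix.posSemidef_conjTranspose_mul_self _

lemma ptraceSnd_posSemidef [Fintype I] [Fintype K] [DecidableEq K]
    {M : Matrix (I × K) (I × K) ℂ} (hM : M.PosSemidef) : (ptraceSnd M).PosSemidef := by
  classical
  refine Matrix.PosSemidef.of_dotProduct_mulVec_nonneg ?_ ?_
  · ext a b
    simp only [Matrix.conjTranspose_apply, ptraceSnd, Matrix.of_apply, star_sum]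
    exact Finset.sum_congr rfl fun k _ => congrFun (congrFun hM.1 (a, k)) (b, k)
  · intro x
    have expand : ∀ k : K,
        star (fun p : I × K => if p.2 = k then x p.1 else 0)
          ⬝ᵥ (M *ᵥ fun p : I × K => if p.2 = k then x p.1 else 0)
        = ∑ a : I, ∑ b : I, star (x a) * M (a, k) (b, k) * x b := by
      intro k
      rw [dot_mulVec_eq]
      simp only [Fintype.sum_prod_type, Pi.star_apply, apply_ite star, star_zero,
        ite_mul, mul_ite, mul_zero, zero_mul, Finset.sum_ite_irrel, Finset.sum_const_zero,
        Finset.sum_ite_eq', Finset.mem_univ, if_true]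
    have lhs : star x ⬝ᵥ (ptraceSnd M *ᵥ x)
        = ∑ k : K, ∑ a : I, ∑ b : I, star (x a) * M (a, k) (b, k) * x b := by
      rw [dot_mulVec_eq]
      simp only [ptraceSnd, Matrix.of_apply, Finset.sum_mul, Finset.mul_sum]
      rw [show (∑ a : I, ∑ b : I, ∑ k : K, star (x a) * M (a, k) (b, k) * x b)
          = ∑ a : I, ∑ k : K, ∑ b : I, star (x a) * M (a, k) (b, k) * x b from
        Finset.sum_congr rfl fun a _ => Finset.sum_comm, Finset.sum_comm]
    rw [lhs]
    refine Finset.sum_nonneg fun k _ => ?_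
    rw [← expand k]
    exact hM.dotProduct_mulVec_nonneg _

end Aux
section Aux2
open Kronecker

lemma sum_swap4 {α β γ δ : Type*} [Fintype α] [Fintype β] [Fintype γ] [Fintype δ]
    (f : α → β → γ → δ → ℂ) :
    ∑ a, ∑ k, ∑ b, ∑ m, f a k b m = ∑ k, ∑ m, ∑ a, ∑ b, f a k b m := by
  rw [Finset.sum_comm]
  refine Finset.sum_congr rfl fun k _ => ?_
  calc (∑ a, ∑ b, ∑ m, f a k b m)
      = ∑ a, ∑ m, ∑ b, f a k b m := Finset.sum_congr rfl fun a _ => Finset.sum_comm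
    _ = ∑ m, ∑ a, ∑ b, f a k b m := Finset.sum_comm

lemma dot_slice {I K : Type*} [Fintype I] [Fintype K] [DecidableEq K]
    (M : Matrix (I × K) (I × K) ℂ) (y : I → ℂ) (l : K) :
    star (fun p : I × K => if p.2 = l then y p.1 else 0)
        ⬝ᵥ (M *ᵥ fun p : I × K => if p.2 = l then y p.1 else 0)
      = ∑ a, ∑ b, star (y a) * M (a, l) (b, l) * y b := by
  rw [dot_mulVec_eq]
  simp only [Fintype.sum_prod_type, Pi.star_apply, apply_ite star, star_zero,
    ite_mul, mul_ite, mul_zero, zero_mul, Finset.sum_ite_irrel, Finset.sum_const_zero,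
    Finset.sum_ite_eq', Finset.mem_univ, if_true]

lemma euclid_norm_sq {I : Type*} [Fintype I] (v : I → ℂ) :
    ∑ i, ‖v i‖ ^ 2 = ‖(WithLp.equiv 2 (I → ℂ)).symm v‖ ^ 2 := by
  rw [EuclideanSpace.norm_eq]
  rw [Real.sq_sqrt (Finset.sum_nonneg fun i _ => sq_nonneg _)]
  rfl

lemma mulVec_sum' {I J K : Type*} [Fintype J] [Fintype K] (B : Matrix I J ℂ) (v : K → J → ℂ) :
    B *ᵥ (∑ k, v k) = ∑ k : K, B *ᵥ v k := by
  funext p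
  simp only [Matrix.mulVec, dotProduct, Finset.sum_apply, Finset.mul_sum, Pi.smul_apply,
    Finset.sum_fn]
  rw [Finset.sum_comm]

lemma ptrace_bound {F K : Type*} [Fintype F] [Fintype K] [DecidableEq K]
    {M : Matrix (F × K) (F × K) ℂ} (hM : M.PosSemidef) :
    ((((Fintype.card K : ℝ)) : ℂ) •
        (Matrix.kroneckerMap (· * ·) (ptraceSnd M) (1 : Matrix K K ℂ)) - M).PosSemidef := by
  classical
  obtain ⟨B, hB⟩ := psd_eq_ct_mul_self hM
  have hT : (Matrix.kroneckerMap (· * ·) (ptraceSnd M) (1 : Matrix K K ℂ)).PosSemidef :=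
    kronecker_posSemidef (ptraceSnd_posSemidef hM) Matrix.PosSemidef.one
  refine Matrix.PosSemidef.of_dotProduct_mulVec_nonneg ?_ ?_
  · exact ((psd_smul_coe hT (Nat.cast_nonneg _)).1).sub hM.1
  · intro x
    set w : K → K → (F × K → ℂ) := fun k l p => if p.2 = l then x (p.1, k) else 0 with hw
    have hsplit : ∀ v : F × K → ℂ,
        star v ⬝ᵥ (M *ᵥ v) = ((∑ i, ‖(B *ᵥ v) i‖ ^ 2 : ℝ) : ℂ) := by
      intro v
      rw [hB, ← Matrix.mulVec_mulVec, Matrix.dotProduct_mulVec, ← Matrix.star_mulVec,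
        star_dot_self_eq]
    have hxw : x = ∑ k : K, w k k := by
      funext p
      simp [hw]
    have hClaimC : star x ⬝ᵥ ((Matrix.kroneckerMap (· * ·) (ptraceSnd M)
          (1 : Matrix K K ℂ)) *ᵥ x)
        = ∑ k : K, ∑ l : K, star (w k l) ⬝ᵥ (M *ᵥ w k l) := by
      have hR : ∀ k l : K, star (w k l) ⬝ᵥ (M *ᵥ w k l)
          = ∑ a : F, ∑ b : F, star (x (a, k)) * M (a, l) (b, l) * x (b, k) :=
        fun k l => dot_slice M (fun a => x (a, k)) l
      rw [dot_mulVec_eq]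
      simp only [Fintype.sum_prod_type, Matrix.kroneckerMap_apply, ptraceSnd,
        Matrix.of_apply, Matrix.one_apply, mul_ite, mul_one, mul_zero, ite_mul, zero_mul,
        Finset.sum_ite_irrel, Finset.sum_const_zero, Finset.sum_ite_eq, Finset.mem_univ,
        if_true, Finset.sum_mul, Finset.mul_sum]
      rw [sum_swap4 (f := fun a k b m => star (x (a, k)) * M (a, m) (b, m) * x (b, k))]
      refine Finset.sum_congr rfl fun k _ => Finset.sum_congr rfl fun l _ => ?_
      rw [hR k l]
    rw [Matrix.sub_mulVec, dotProduct_sub, Matrix.smul_mulVec, dotProduct_smul,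
      hClaimC, hsplit]
    rw [smul_eq_mul]
    have hsimp : (∑ k : K, ∑ l : K, star (w k l) ⬝ᵥ (M *ᵥ w k l))
        = ((∑ k : K, ∑ l : K, ∑ i, ‖(B *ᵥ w k l) i‖ ^ 2 : ℝ) : ℂ) := by
      push_cast
      exact Finset.sum_congr rfl fun k _ => Finset.sum_congr rfl fun l _ => by
        rw [hsplit (w k l)]; push_cast; rfl
    rw [hsimp]
    rw [show ((Fintype.card K : ℝ) : ℂ) * ((∑ k : K, ∑ l : K, ∑ i, ‖(B *ᵥ w k l) i‖ ^ 2 : ℝ) : ℂ)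
        = (((Fintype.card K : ℝ) * ∑ k : K, ∑ l : K, ∑ i, ‖(B *ᵥ w k l) i‖ ^ 2 : ℝ) : ℂ) by
      push_cast; ring]
    rw [← Complex.ofReal_sub, Complex.zero_le_real, sub_nonneg]
    -- real inequality
    set L := (WithLp.linearEquiv 2 ℂ ((F × K) → ℂ)).symm
    have hnorm : ∀ v : F × K → ℂ, ∑ i, ‖v i‖ ^ 2 = ‖L v‖ ^ 2 := fun v => euclid_norm_sq v
    have hBx : B *ᵥ x = ∑ k : K, B *ᵥ w k k := by
      rw [hxw, mulVec_sum']
    calc ∑ i, ‖(B *ᵥ x) i‖ ^ 2 = ‖L (B *ᵥ x)‖ ^ 2 := hnorm _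
      _ = ‖∑ k : K, L (B *ᵥ w k k)‖ ^ 2 := by rw [hBx, map_sum]
      _ ≤ (∑ k : K, ‖L (B *ᵥ w k k)‖) ^ 2 := by
          have h1 := norm_sum_le Finset.univ (fun k : K => L (B *ᵥ w k k))
          exact pow_le_pow_left₀ (norm_nonneg _) h1 2
      _ ≤ (Fintype.card K : ℝ) * ∑ k : K, ‖L (B *ᵥ w k k)‖ ^ 2 := by
          simpa using sq_sum_le_card_mul_sum_sq
            (s := (Finset.univ : Finset K)) (f := fun k => ‖L (B *ᵥ w k k)‖)
      _ ≤ (Fintype.card K : ℝ) * ∑ k : K, ∑ l : K, ∑ i, ‖(B *ᵥ w k l) i‖ ^ 2 := by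
          refine mul_le_mul_of_nonneg_left ?_ (Nat.cast_nonneg _)
          refine Finset.sum_le_sum fun k _ => ?_
          rw [← hnorm]
          exact Finset.single_le_sum
            (f := fun l => ∑ i, ‖(B *ᵥ w k l) i‖ ^ 2)
            (fun l _ => Finset.sum_nonneg fun i _ => sq_nonneg _) (Finset.mem_univ k)

end Aux2
section Aux3

lemma exists_inv_bound {K : Type*} [Fintype K] [DecidableEq K] [Nonempty K]
    {ρ : Matrix K K ℂ} (hρ : ρ.PosDef) :
    ∃ c : ℝ, 0 < c ∧ ((c : ℂ) • ρ - 1).PosSemidef := by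
  classical
  have hH := hρ.isHermitian
  set lam := hH.eigenvalues with hlam
  have hpos : ∀ i, 0 < lam i := hρ.eigenvalues_pos
  refine ⟨∑ i, (lam i)⁻¹,
    Finset.sum_pos (fun i _ => inv_pos.mpr (hpos i)) Finset.univ_nonempty, ?_⟩
  set c : ℝ := ∑ i, (lam i)⁻¹ with hc
  have hci : ∀ i, 1 ≤ c * lam i := by
    intro i
    have h1 : (lam i)⁻¹ ≤ c :=
      Finset.single_le_sum (f := fun j => (lam j)⁻¹)
        (fun j _ => (inv_pos.mpr (hpos j)).le) (Finset.mem_univ i)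
    calc (1:ℝ) = (lam i)⁻¹ * lam i := (inv_mul_cancel₀ (hpos i).ne').symm
      _ ≤ c * lam i := mul_le_mul_of_nonneg_right h1 (hpos i).le
  set U : Matrix K K ℂ := (hH.eigenvectorUnitary : Matrix K K ℂ) with hU
  have hUU : U * star U = 1 := Unitary.coe_mul_star_self hH.eigenvectorUnitary
  have key : (c : ℂ) • ρ - 1
      = U * Matrix.diagonal (fun i => ((c * lam i - 1 : ℝ) : ℂ)) * star U := by
    have hdiag : Matrix.diagonal (fun i => ((c * lam i - 1 : ℝ) : ℂ))
        = (c : ℂ) • Matrix.diagonal (RCLike.ofReal ∘ lam) - 1 := by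
      ext i j
      rcases eq_or_ne i j with rfl | hne
      · simp only [Matrix.diagonal_apply_eq, Matrix.sub_apply, Matrix.smul_apply,
          Matrix.one_apply_eq, Function.comp_apply, smul_eq_mul]
        push_cast
        rfl
      · simp [Matrix.diagonal_apply_ne _ hne, Matrix.one_apply_ne hne]
    rw [hdiag, Matrix.mul_sub, Matrix.sub_mul, Matrix.mul_smul, Matrix.smul_mul,
      Matrix.mul_one, hUU]
    congr 1
    congr 1
    rw [hU, hlam]
    exact hH.spectral_theorem
  rw [key]
  refine Matrix.PosSemidef.mul_mul_conjTranspose_same ?_ U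
  · refine Matrix.PosSemidef.diagonal fun i => ?_
    have h0 : (0:ℂ) ≤ ((c * lam i - 1 : ℝ) : ℂ) := by
      rw [Complex.zero_le_real]; linarith [hci i]
    simpa using h0

lemma ampl_posSemidef {I J : Type*} [Fintype I] [Fintype J]
    {Ψ : Matrix I I ℂ → Matrix J J ℂ} (hΨ : IsCP Ψ)
    {F : Type*} [Fintype F] [DecidableEq F]
    {M : Matrix (F × I) (F × I) ℂ} (hM : M.PosSemidef) :
    (ampl Ψ M).PosSemidef := by
  classical
  set e := Fintype.equivFin F with he
  have hM' : (M.submatrix (Prod.map e.symm id) (Prod.map e.symm id)).PosSemidef :=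
    hM.submatrix _
  have h2 := hΨ (Fintype.card F) _ hM'
  have h3 : ampl Ψ M
      = (ampl Ψ (M.submatrix (Prod.map e.symm id) (Prod.map e.symm id))).submatrix
          (Prod.map e id) (Prod.map e id) := by
    ext ⟨p1, p2⟩ ⟨q1, q2⟩
    simp only [ampl, Matrix.submatrix_apply, Matrix.of_apply, Prod.map_apply, id,
      Equiv.symm_apply_apply]
  rw [h3]
  exact h2.submatrix _

lemma cp_apply_posSemidef {I J : Type*} [Fintype I] [Fintype J]
    {Ψ : Matrix I I ℂ → Matrix J J ℂ} (hΨ : IsCP Ψ)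
    {X : Matrix I I ℂ} (hX : X.PosSemidef) : (Ψ X).PosSemidef := by
  have hM : ((X.submatrix Prod.snd Prod.snd : Matrix (Fin 1 × I) (Fin 1 × I) ℂ)).PosSemidef :=
    hX.submatrix _
  have h2 := hΨ 1 _ hM
  have h3 : Ψ X = (ampl Ψ (X.submatrix Prod.snd Prod.snd)).submatrix
      (fun j => ((0 : Fin 1), j)) (fun j => ((0 : Fin 1), j)) := by
    ext i j
    simp only [ampl, Matrix.submatrix_apply, Matrix.of_apply]
    rfl
  rw [h3]
  exact h2.submatrix _

lemma ampl_smul_sub {F I J : Type*} [Fintype F] [Fintype I] [Fintype J]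
    (Ψ : Matrix I I ℂ →ₗ[ℂ] Matrix J J ℂ) (c : ℂ)
    (P Q : Matrix (F × I) (F × I) ℂ) :
    ampl Ψ (c • P - Q) = c • ampl (⇑Ψ) P - ampl (⇑Ψ) Q := by
  ext p q
  have h : (Matrix.of fun a b => (c • P - Q) (p.1, a) (q.1, b))
      = c • (Matrix.of fun a b => P (p.1, a) (q.1, b))
        - Matrix.of fun a b => Q (p.1, a) (q.1, b) := by
    ext a b; simp
  simp only [ampl, Matrix.of_apply]
  rw [h, map_sub, _root_.map_smul]
  simp only [ampl, Matrix.of_apply, Matrix.sub_apply, Matrix.smul_apply]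

lemma ampl_kronecker {F I J : Type*} [Fintype F] [Fintype I] [Fintype J]
    (Ψ : Matrix I I ℂ →ₗ[ℂ] Matrix J J ℂ) (A : Matrix F F ℂ) (B : Matrix I I ℂ) :
    ampl (⇑Ψ) (Matrix.kroneckerMap (· * ·) A B)
      = Matrix.kroneckerMap (· * ·) A (Ψ B) := by
  ext p q
  simp only [ampl, Matrix.of_apply, Matrix.kroneckerMap_apply]
  rw [show (Matrix.of fun a b => A p.1 q.1 * B a b) = A p.1 q.1 • B by ext a b; simp]
  rw [_root_.map_smul]
  simp

end Aux3
section Main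
open Kronecker

variable {dA dK : ℕ}

lemma fcsTau_posSemidef
    (E : ℕ → Matrix (Fin dK) (Fin dK) ℂ →ₗ[ℂ] Matrix (Fin dA × Fin dK) (Fin dA × Fin dK) ℂ)
    (hCP : ∀ n, IsCP (E n)) {ρ : Matrix (Fin dK) (Fin dK) ℂ} (hρ : ρ.PosSemidef) :
    ∀ n, (fcsTau E ρ n).PosSemidef := by
  intro n
  induction n with
  | zero =>
    show (Matrix.reindex (tauEquiv0 dA dK) (tauEquiv0 dA dK) (E 0 ρ)).PosSemidef
    rw [Matrix.reindex_apply]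
    exact (cp_apply_posSemidef (hCP 0) hρ).submatrix _
  | succ n ih =>
    show (Matrix.reindex (tauEquivS dA dK n) (tauEquivS dA dK n)
      (ampl (E (n + 1)) (fcsTau E ρ n))).PosSemidef
    rw [Matrix.reindex_apply]
    exact (ampl_posSemidef (hCP (n + 1)) ih).submatrix _

end Main

/-- **Non-homogeneous finitely correlated states satisfy the upper factorization property
(Proposition 1).** Here `fcsTau E ρ n` is the paper's `τ_{n+1}`, `ptraceSnd (fcsTau E ρ n)`
is `ρ_{n+1}` and `ptraceSnd (E n ρ)` is `ρ̃_{n+1}`; the conclusion is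
`ρ_n ≤ R ρ_{n-1} ⊗ ρ̃_n` for some `R > 1` and every `n ≥ 2`. -/
theorem finitely_correlated_upper_factorization
    {dA dK : ℕ}
    (E : ℕ → Matrix (Fin dK) (Fin dK) ℂ →ₗ[ℂ] Matrix (Fin dA × Fin dK) (Fin dA × Fin dK) ℂ)
    (hCP : ∀ n, IsCP (E n)) (hTP : ∀ n, IsTP (E n))
    (ρ : Matrix (Fin dK) (Fin dK) ℂ) (hρ : ρ.PosDef) (hρtr : ρ.trace = 1)
    (hinv : ∀ n, ptraceFst (E n ρ) = ρ) :
    ∃ R : ℝ, 1 < R ∧ ∀ n : ℕ,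
      loewnerLE (ptraceSnd (fcsTau E ρ (n + 1)))
        ((R : ℂ) • tensorExt (ptraceSnd (fcsTau E ρ n)) (ptraceSnd (E (n + 1) ρ))) := by
  classical
  rcases Nat.eq_zero_or_pos dK with hdK0 | hdKpos
  · exfalso
    subst hdK0
    rw [Matrix.trace] at hρtr
    simp at hρtr
  haveI : Nonempty (Fin dK) := ⟨⟨0, hdKpos⟩⟩
  obtain ⟨c, hc, hcρ⟩ := exists_inv_bound hρ
  have hdK1 : (1 : ℝ) ≤ (dK : ℝ) := by exact_mod_cast hdKpos
  refine ⟨(dK : ℝ) * c + 1, by nlinarith, ?_⟩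
  intro n
  set R : ℝ := (dK : ℝ) * c + 1 with hR
  set τ := fcsTau E ρ n with hτ
  have hτpsd : τ.PosSemidef := fcsTau_posSemidef E hCP hρ.posSemidef n
  set σ := ptraceSnd τ with hσ
  have hσpsd : σ.PosSemidef := ptraceSnd_posSemidef hτpsd
  have hΔ : ((R : ℂ) • Matrix.kroneckerMap (· * ·) σ ρ - τ).PosSemidef := by
    have h1 : ((((dK : ℝ)) : ℂ) •
        Matrix.kroneckerMap (· * ·) σ (1 : Matrix (Fin dK) (Fin dK) ℂ) - τ).PosSemidef := by
      have h0 := ptrace_bound (M := τ) hτpsd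
      simpa [Fintype.card_fin] using h0
    have h2 : ((((dK : ℝ)) : ℂ) •
        Matrix.kroneckerMap (· * ·) σ ((c : ℂ) • ρ - 1)).PosSemidef :=
      psd_smul_coe (kronecker_posSemidef hσpsd hcρ) (Nat.cast_nonneg dK)
    have key : (R : ℂ) • Matrix.kroneckerMap (· * ·) σ ρ - τ
        = ((((dK : ℝ)) : ℂ) •
            Matrix.kroneckerMap (· * ·) σ (1 : Matrix (Fin dK) (Fin dK) ℂ) - τ)
          + (((dK : ℝ)) : ℂ) • Matrix.kroneckerMap (· * ·) σ ((c : ℂ) • ρ - 1)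
          + Matrix.kroneckerMap (· * ·) σ ρ := by
      ext p q
      simp only [Matrix.sub_apply, Matrix.add_apply, Matrix.smul_apply,
        Matrix.kroneckerMap_apply, Matrix.one_apply, hR, smul_eq_mul, Matrix.smul_apply]
      push_cast
      ring
    rw [key]
    exact (h1.add h2).add (kronecker_posSemidef hσpsd hρ.posSemidef)
  have hD : ((R : ℂ) • Matrix.kroneckerMap (· * ·) σ (E (n + 1) ρ)
      - ampl (E (n + 1)) τ).PosSemidef := by
    have h1 := ampl_posSemidef (hCP (n + 1)) hΔ
    rwa [ampl_smul_sub, ampl_kronecker] at h1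
  set g : ((Fin (n + 1) → Fin dA) × Fin dA) × Fin dK →
      (Fin (n + 1) → Fin dA) × (Fin dA × Fin dK) :=
    fun x => (x.1.1, (x.1.2, x.2)) with hg
  have hH2 : (ptraceSnd (((R : ℂ) • Matrix.kroneckerMap (· * ·) σ (E (n + 1) ρ)
      - ampl (E (n + 1)) τ).submatrix g g)).PosSemidef :=
    ptraceSnd_posSemidef (hD.submatrix g)
  show ((R : ℂ) • tensorExt σ (ptraceSnd (E (n + 1) ρ))
      - ptraceSnd (fcsTau E ρ (n + 1))).PosSemidef
  have hfinal : (R : ℂ) • tensorExt σ (ptraceSnd (E (n + 1) ρ))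
        - ptraceSnd (fcsTau E ρ (n + 1))
      = (ptraceSnd (((R : ℂ) • Matrix.kroneckerMap (· * ·) σ (E (n + 1) ρ)
          - ampl (E (n + 1)) τ).submatrix g g)).submatrix
          (fun gg => (fun i => gg i.castSucc, gg (Fin.last (n + 1))))
          (fun gg => (fun i => gg i.castSucc, gg (Fin.last (n + 1)))) := by
    ext g1 g2
    show (R : ℂ) * tensorExt σ (ptraceSnd (E (n + 1) ρ)) g1 g2
        - ptraceSnd (fcsTau E ρ (n + 1)) g1 g2 = _
    have ha : tensorExt σ (ptraceSnd (E (n + 1) ρ)) g1 g2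
        = σ (fun i => g1 i.castSucc) (fun i => g2 i.castSucc)
          * ∑ k, (E (n + 1) ρ) (g1 (Fin.last (n + 1)), k) (g2 (Fin.last (n + 1)), k) := by
      simp [tensorExt, splitLast, ptraceSnd]
    have hb : ptraceSnd (fcsTau E ρ (n + 1)) g1 g2
        = ∑ k, ampl (E (n + 1)) τ
            ((fun i => g1 i.castSucc, (g1 (Fin.last (n + 1)), k)))
            ((fun i => g2 i.castSucc, (g2 (Fin.last (n + 1)), k))) := by
      show (∑ k, (Matrix.reindex (tauEquivS dA dK n) (tauEquivS dA dK n)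
          (ampl (E (n + 1)) τ)) ((g1, k)) ((g2, k))) = _
      refine Finset.sum_congr rfl fun k _ => ?_
      simp [tauEquivS, splitLast, Equiv.prodAssoc]
    rw [ha, hb]
    simp only [Matrix.submatrix_apply, ptraceSnd, Matrix.of_apply, Matrix.sub_apply,
      Matrix.smul_apply, Matrix.kroneckerMap_apply, smul_eq_mul, hg]
    rw [Finset.sum_sub_distrib, Finset.mul_sum, Finset.mul_sum]
  rw [hfinal]
  exact hH2.submatrix _
end QHT
end
end

section
/- Let B be a star-subalgebra of M_d(ℂ) containing the identity, and let ρ be a faithful state on B, i.e. a positive semidefinite matrix ρ ∈ M_d(ℂ) with Tr[ρ] = 1 such that Tr[ρ b*b] > 0 for every nonzero b ∈ B. Define Φ : B → B by Φ(b) := Tr[ρ b]·I. Then there exists a constant R > 1 such that R·Φ − id_B is completely positive, i.e. for every m ∈ ℕ, the map id_{M_m(ℂ)} ⊗ (R·Φ − id_B) sends every positive semidefinite element of M_m(ℂ) ⊗ M_d(ℂ) lying in M_m(ℂ) ⊗ B to a positive semidefinite matrix. -/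
open Matrix MeasureTheory
open scoped ComplexOrder

noncomputable section

namespace QHT

variable {ι : Type*} [Fintype ι] [DecidableEq ι]

section Aux

/-- Conjugation by a unitary, as an algebra homomorphism. -/
private def unitaryConj (U : Matrix ι ι ℂ) (hU : star U * U = 1) (hU' : U * star U = 1) :
    Matrix ι ι ℂ →ₐ[ℂ] Matrix ι ι ℂ where
  toFun X := U * X * star U
  map_one' := show U * 1 * star U = 1 by rw [mul_one, hU']
  map_mul' X Y := by
    show U * (X * Y) * star U = (U * X * star U) * (U * Y * star U)
    have h : star U * (U * (Y * star U)) = Y * star U := by rw [← mul_assoc, hU, one_mul]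
    simp only [mul_assoc, h]
  map_zero' := show U * 0 * star U = 0 by simp
  map_add' X Y := show U * (X + Y) * star U = U * X * star U + U * Y * star U by
    rw [mul_add, add_mul]
  commutes' r := by
    show U * algebraMap ℂ (Matrix ι ι ℂ) r * star U = algebraMap ℂ (Matrix ι ι ℂ) r
    simp only [Algebra.algebraMap_eq_smul_one, mul_smul_comm, smul_mul_assoc, mul_one, hU']

private lemma aeval_spectral {b : Matrix ι ι ℂ} (hb : b.IsHermitian) (p : Polynomial ℝ) :
    Polynomial.aeval b p =
      (hb.eigenvectorUnitary : Matrix ι ι ℂ) *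
        Matrix.diagonal (fun i => ((p.eval (hb.eigenvalues i) : ℝ) : ℂ)) *
        star (hb.eigenvectorUnitary : Matrix ι ι ℂ) := by
  have hU : star (hb.eigenvectorUnitary : Matrix ι ι ℂ) * (hb.eigenvectorUnitary : Matrix ι ι ℂ) = 1 :=
    Matrix.UnitaryGroup.star_mul_self hb.eigenvectorUnitary
  have hU' : (hb.eigenvectorUnitary : Matrix ι ι ℂ) * star (hb.eigenvectorUnitary : Matrix ι ι ℂ) = 1 :=
    hb.eigenvectorUnitary.2.2
  set U : Matrix ι ι ℂ := (hb.eigenvectorUnitary : Matrix ι ι ℂ) with hUdef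
  set v : ι → ℂ := RCLike.ofReal ∘ hb.eigenvalues with hvdef
  have hconj : ∀ X : Matrix ι ι ℂ, U * X * star U
      = ((unitaryConj U hU hU').restrictScalars ℝ) X := fun _ => rfl
  conv_lhs => rw [hb.spectral_theorem, Unitary.conjStarAlgAut_apply]
  rw [hconj, Polynomial.aeval_algHom_apply,
    show Matrix.diagonal v = Matrix.diagonalAlgHom (R := ℝ) v from rfl,
    Polynomial.aeval_algHom_apply]
  have hv : Polynomial.aeval v p = fun i => ((p.eval (hb.eigenvalues i) : ℝ) : ℂ) := by
    funext i
    have h1 := Polynomial.aeval_algHom_apply (Pi.evalAlgHom ℝ (fun _ : ι => ℂ) i) v p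
    have h2 : v i = algebraMap ℝ ℂ (hb.eigenvalues i) := by
      simp [hvdef, Complex.coe_algebraMap]
    calc (Polynomial.aeval v p) i = Polynomial.aeval (v i) p := h1.symm
    _ = _ := by
        rw [h2, Polynomial.aeval_algebraMap_apply_eq_algebraMap_eval]
        simp [Complex.coe_algebraMap]
  rw [hv]
  rfl


private lemma diag_nonneg' {P : Matrix ι ι ℂ} (hP : P.PosSemidef) (i : ι) : 0 ≤ P i i := by
  have h := hP.dotProduct_mulVec_nonneg (Pi.single i 1)
  have e : star (Pi.single i 1 : ι → ℂ) ⬝ᵥ (P *ᵥ Pi.single i 1) = P i i := by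
    have hs : star (Pi.single i 1 : ι → ℂ) = Pi.single i 1 := by
      funext j
      by_cases h : j = i <;> simp [Pi.single_apply, h]
    rw [hs, single_dotProduct, Matrix.mulVec_single]
    simp
  rwa [e] at h

private lemma trace_nonneg' {P : Matrix ι ι ℂ} (hP : P.PosSemidef) : 0 ≤ P.trace := by
  rw [Matrix.trace]
  exact Finset.sum_nonneg fun i _ => diag_nonneg' hP i

private lemma entry_le_trace {P : Matrix ι ι ℂ} (hP : P.PosSemidef) (i : ι) :
    P i i ≤ P.trace := by
  rw [Matrix.trace]
  exact Finset.single_le_sum (f := fun j => P.diag j) (fun j _ => diag_nonneg' hP j)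
    (Finset.mem_univ i)

private lemma exists_star_mul_self_eq {d : ℕ} (B : StarSubalgebra ℂ (Matrix (Fin d) (Fin d) ℂ))
    {b : Matrix (Fin d) (Fin d) ℂ} (hmem : b ∈ B) (hb : b.PosSemidef) :
    ∃ s, s ∈ B ∧ star s * s = b := by
  classical
  set p : Polynomial ℝ :=
    Lagrange.interpolate (Finset.image hb.1.eigenvalues Finset.univ) id Real.sqrt with hpdef
  refine ⟨Polynomial.aeval b p, ?_, ?_⟩
  · have h1 : Polynomial.aeval b p ∈ Algebra.adjoin ℝ {b} :=
      Polynomial.aeval_mem_adjoin_singleton ℝ b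
    have h2 : Algebra.adjoin ℝ {b} ≤ (B.toSubalgebra).restrictScalars ℝ :=
      Algebra.adjoin_le (by simpa using hmem)
    exact h2 h1
  · have heval : ∀ i, p.eval (hb.1.eigenvalues i) = Real.sqrt (hb.1.eigenvalues i) := by
      intro i
      exact Lagrange.eval_interpolate_at_node _ (Set.injOn_id _)
        (Finset.mem_image_of_mem _ (Finset.mem_univ i))
    rw [aeval_spectral hb.1 p]
    set U : Matrix (Fin d) (Fin d) ℂ := (hb.1.eigenvectorUnitary : Matrix (Fin d) (Fin d) ℂ)
    set D : Matrix (Fin d) (Fin d) ℂ :=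
      Matrix.diagonal (fun i => ((p.eval (hb.1.eigenvalues i) : ℝ) : ℂ)) with hDdef
    have hU : star U * U = 1 := Matrix.UnitaryGroup.star_mul_self hb.1.eigenvectorUnitary
    have hDstar : star D = D := by
      rw [hDdef, Matrix.star_eq_conjTranspose, Matrix.diagonal_conjTranspose]
      refine (Matrix.diagonal_eq_diagonal_iff).mpr fun i => ?_
      exact Complex.conj_ofReal _
    have hstar : star (U * D * star U) = U * D * star U := by
      rw [Matrix.star_mul, Matrix.star_mul, star_star, hDstar, Matrix.mul_assoc]
    rw [hstar]
    have : U * D * star U * (U * D * star U) = U * (D * D) * star U := by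
      have h : star U * (U * (D * star U)) = D * star U := by rw [← mul_assoc, hU, one_mul]
      simp only [mul_assoc, h]
    rw [this]
    have hDD : D * D = Matrix.diagonal (RCLike.ofReal ∘ hb.1.eigenvalues) := by
      rw [hDdef, Matrix.diagonal_mul_diagonal]
      refine (Matrix.diagonal_eq_diagonal_iff).mpr fun i => ?_
      rw [heval, ← Complex.ofReal_mul, Real.mul_self_sqrt (hb.eigenvalues_nonneg i)]
      rfl
    rw [hDD]; exact hb.1.spectral_theorem.symm


private lemma trace_im_herm {P : Matrix ι ι ℂ} (hP : P.IsHermitian) : (P.trace).im = 0 := by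
  have h : (starRingEnd ℂ) P.trace = P.trace := by
    have := Matrix.trace_conjTranspose P
    rw [hP] at this
    exact this.symm
  exact Complex.conj_eq_iff_im.mp h

private lemma trace_mul_im {ρ P : Matrix ι ι ℂ} (hρ : ρ.IsHermitian) (hP : P.IsHermitian) :
    ((ρ * P).trace).im = 0 := by
  have h : (starRingEnd ℂ) ((ρ * P).trace) = (ρ * P).trace := by
    have h1 := Matrix.trace_conjTranspose (ρ * P)
    rw [Matrix.conjTranspose_mul, hρ, hP, Matrix.trace_mul_comm] at h1
    exact h1.symm
  exact Complex.conj_eq_iff_im.mp h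

end Aux

section Compact

attribute [local instance] Matrix.normedAddCommGroup Matrix.normedSpace

private lemma exists_pos_const {d : ℕ} (B : StarSubalgebra ℂ (Matrix (Fin d) (Fin d) ℂ))
    (ρ : Matrix (Fin d) (Fin d) ℂ) (hρ : ρ.PosSemidef) (hρtr : ρ.trace = 1)
    (hfaith : ∀ b ∈ B, b ≠ 0 → 0 < ((ρ * (star b * b)).trace).re) :
    ∃ c : ℝ, 0 < c ∧ ∀ b ∈ B, b.PosSemidef → (c : ℂ) * b.trace ≤ (ρ * b).trace := by
  classical
  have hd : 0 < d := by
    rcases Nat.eq_zero_or_pos d with h | h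
    · exfalso
      subst h
      rw [Matrix.trace] at hρtr
      simp at hρtr
    · exact h
  have key : ∀ b ∈ B, b.PosSemidef → b ≠ 0 → 0 < ((ρ * b).trace).re := by
    intro b hmem hb hne
    obtain ⟨s, hsmem, hss⟩ := exists_star_mul_self_eq B hmem hb
    have hsne : s ≠ 0 := by
      rintro rfl
      rw [star_zero, zero_mul] at hss
      exact hne hss.symm
    have := hfaith s hsmem hsne
    rwa [hss] at this
  set K : Set (Matrix (Fin d) (Fin d) ℂ) :=
    {x | x ∈ B ∧ xᴴ = x ∧ (∀ v : Fin d → ℂ, 0 ≤ star v ⬝ᵥ (x *ᵥ v)) ∧ ‖x‖ = 1} with hKdef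
  have hK1 : (1 : Matrix (Fin d) (Fin d) ℂ) ∈ K := by
    refine ⟨one_mem B, Matrix.conjTranspose_one, fun v => ?_, ?_⟩
    · rw [Matrix.one_mulVec, dotProduct]
      exact Finset.sum_nonneg fun i _ => star_mul_self_nonneg (v i)
    · apply le_antisymm
      · rw [Matrix.norm_le_iff zero_le_one]
        intro i j
        by_cases h : i = j <;> simp [Matrix.one_apply, h]
      · have h := Matrix.norm_entry_le_entrywise_sup_norm
          (1 : Matrix (Fin d) (Fin d) ℂ) (i := ⟨0, hd⟩) (j := ⟨0, hd⟩)
        simpa using h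
  have hKclosed : IsClosed K := by
    have h1 : IsClosed ((Subalgebra.toSubmodule B.toSubalgebra :
        Submodule ℂ (Matrix (Fin d) (Fin d) ℂ)) : Set (Matrix (Fin d) (Fin d) ℂ)) :=
      Submodule.closed_of_finiteDimensional (Subalgebra.toSubmodule B.toSubalgebra)
    have h2 : IsClosed {x : Matrix (Fin d) (Fin d) ℂ | xᴴ = x} :=
      isClosed_eq (Continuous.matrix_conjTranspose continuous_id) continuous_id
    have hcl : IsClosed {z : ℂ | 0 ≤ z} := by
      have he : {z : ℂ | 0 ≤ z} = Complex.re ⁻¹' (Set.Ici 0) ∩ Complex.im ⁻¹' {0} := by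
        ext z
        simp only [Set.mem_setOf_eq, Complex.le_def, Set.mem_inter_iff, Set.mem_preimage,
          Set.mem_Ici, Set.mem_singleton_iff]
        constructor
        · rintro ⟨h1, h2⟩; exact ⟨h1, h2.symm⟩
        · rintro ⟨h1, h2⟩; exact ⟨h1, h2.symm⟩
      rw [he]
      exact (isClosed_Ici.preimage Complex.continuous_re).inter
        (isClosed_singleton.preimage Complex.continuous_im)
    have h3 : ∀ v : Fin d → ℂ,
        IsClosed {x : Matrix (Fin d) (Fin d) ℂ | 0 ≤ star v ⬝ᵥ (x *ᵥ v)} := by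
      intro v
      have hcont : Continuous fun x : Matrix (Fin d) (Fin d) ℂ => star v ⬝ᵥ (x *ᵥ v) :=
        Continuous.dotProduct continuous_const (Continuous.matrix_mulVec continuous_id continuous_const)
      exact hcl.preimage hcont
    have h4 : IsClosed {x : Matrix (Fin d) (Fin d) ℂ | ‖x‖ = 1} :=
      isClosed_eq continuous_norm continuous_const
    have hKeq : K = ((Subalgebra.toSubmodule B.toSubalgebra : Submodule ℂ _) : Set _) ∩
        ({x | xᴴ = x} ∩ ((⋂ v : Fin d → ℂ, {x | 0 ≤ star v ⬝ᵥ (x *ᵥ v)}) ∩ {x | ‖x‖ = 1})) := by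
      ext x
      simp only [hKdef, Set.mem_setOf_eq, Set.mem_inter_iff, Set.mem_iInter, SetLike.mem_coe,
        Subalgebra.mem_toSubmodule]
      constructor
      · rintro ⟨ha, hb, hc, hd'⟩; exact ⟨ha, hb, hc, hd'⟩
      · rintro ⟨ha, hb, hc, hd'⟩; exact ⟨ha, hb, hc, hd'⟩
    rw [hKeq]
    exact h1.inter (h2.inter ((isClosed_iInter h3).inter h4))
  have hKbdd : Bornology.IsBounded K := by
    apply (Metric.isBounded_sphere (x := (0 : Matrix (Fin d) (Fin d) ℂ)) (r := 1)).subset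
    intro x hx
    rw [mem_sphere_zero_iff_norm]
    exact hx.2.2.2
  have hKcpt : IsCompact K := Metric.isCompact_of_isClosed_isBounded hKclosed hKbdd
  have hfc : ContinuousOn (fun x : Matrix (Fin d) (Fin d) ℂ => ((ρ * x).trace).re) K := by
    apply Continuous.continuousOn
    exact Complex.continuous_re.comp
      (Continuous.matrix_trace (Continuous.matrix_mul continuous_const continuous_id))
  obtain ⟨x₀, hx₀K, hmin⟩ := hKcpt.exists_isMinOn ⟨1, hK1⟩ hfc
  have hx₀ne : x₀ ≠ 0 := by
    intro h
    have := hx₀K.2.2.2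
    rw [h, norm_zero] at this
    exact zero_ne_one this
  have hc' : 0 < ((ρ * x₀).trace).re :=
    key x₀ hx₀K.1 (Matrix.PosSemidef.of_dotProduct_mulVec_nonneg hx₀K.2.1 hx₀K.2.2.1) hx₀ne
  set c' : ℝ := ((ρ * x₀).trace).re with hc'def
  refine ⟨c' / d, div_pos hc' (Nat.cast_pos.mpr hd), ?_⟩
  intro b hmem hb
  -- reduce to real inequality
  have him1 : (b.trace).im = 0 := trace_im_herm hb.1
  have him2 : ((ρ * b).trace).im = 0 := trace_mul_im hρ.1 hb.1
  rw [Complex.le_def]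
  constructor
  swap
  · rw [Complex.im_ofReal_mul, him1, him2, mul_zero]
  rw [Complex.re_ofReal_mul]
  -- real inequality
  by_cases hb0 : b = 0
  · subst hb0
    simp
  · have ht : 0 < ‖b‖ := norm_pos_iff.mpr hb0
    set t : ℝ := ‖b‖ with htdef
    set x : Matrix (Fin d) (Fin d) ℂ := ((t⁻¹ : ℝ) : ℂ) • b with hxdef
    have hxK : x ∈ K := by
      refine ⟨B.smul_mem hmem _, ?_, fun v => ?_, ?_⟩
      · rw [hxdef, Matrix.conjTranspose_smul, hb.1]
        congr 1
        exact Complex.conj_ofReal _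
      · rw [hxdef, Matrix.smul_mulVec, dotProduct_smul, smul_eq_mul]
        exact mul_nonneg (Complex.zero_le_real.mpr (inv_nonneg.mpr ht.le)) (hb.dotProduct_mulVec_nonneg v)
      · rw [hxdef, norm_smul]
        simp only [Complex.norm_real, Real.norm_eq_abs, abs_of_pos (inv_pos.mpr ht)]
        exact inv_mul_cancel₀ ht.ne'
    have hminx := hmin hxK
    have hfx : ((ρ * x).trace).re = t⁻¹ * ((ρ * b).trace).re := by
      rw [hxdef, Matrix.mul_smul, Matrix.trace_smul, smul_eq_mul, Complex.re_ofReal_mul]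
    have h5 : c' * t ≤ ((ρ * b).trace).re := by
      have h6 : c' ≤ t⁻¹ * ((ρ * b).trace).re := by
        have h6' : c' ≤ ((ρ * x).trace).re := hminx
        rwa [hfx] at h6'
      have h7 := mul_le_mul_of_nonneg_right h6 ht.le
      calc c' * t ≤ (t⁻¹ * ((ρ * b).trace).re) * t := h7
        _ = ((ρ * b).trace).re := by field_simp
    have htr : (b.trace).re ≤ d * t := by
      rw [Matrix.trace, Complex.re_sum]
      calc ∑ i, (b.diag i).re ≤ ∑ _i : Fin d, t := by
            refine Finset.sum_le_sum fun i _ => ?_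
            calc (b.diag i).re ≤ ‖b.diag i‖ := Complex.re_le_norm _
              _ = ‖b i i‖ := rfl
              _ ≤ t := Matrix.norm_entry_le_entrywise_sup_norm b
        _ = d * t := by rw [Finset.sum_const, Finset.card_univ, Fintype.card_fin, nsmul_eq_mul]
    have htrn : 0 ≤ (b.trace).re := by
      have := trace_nonneg' hb
      rw [Complex.le_def] at this
      simpa using this.1
    calc c' / d * (b.trace).re ≤ c' / d * (d * t) := by
          apply mul_le_mul_of_nonneg_left htr
          positivity
      _ = c' * t := by
          field_simp
      _ ≤ ((ρ * b).trace).re := h5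

end Compact

/-- **Lemma 2 (Hiai–Mosonyi–Ogawa).** Let `B` be a star-subalgebra of `M_d(ℂ)` and `ρ` a
faithful state on `B`; let `Φ(b) = Tr[ρ b]·I`. Then there is `R > 1` such that
`R Φ - id_B` is completely positive. -/
theorem exists_R_cp_of_faithful_state
    {d : ℕ} (B : StarSubalgebra ℂ (Matrix (Fin d) (Fin d) ℂ))
    (ρ : Matrix (Fin d) (Fin d) ℂ) (hρ : ρ.PosSemidef) (hρtr : ρ.trace = 1)
    (hfaith : ∀ b ∈ B, b ≠ 0 → 0 < ((ρ * (star b * b)).trace).re) :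
    ∃ R : ℝ, 1 < R ∧ ∀ (m : ℕ) (M : Matrix (Fin m × Fin d) (Fin m × Fin d) ℂ),
      M.PosSemidef →
      (∀ p q : Fin m, (Matrix.of fun a b => M (p, a) (q, b)) ∈ B) →
      (ampl (fun b => (R : ℂ) • (((ρ * b).trace) • (1 : Matrix (Fin d) (Fin d) ℂ)) - b)
        M).PosSemidef := by
  classical
  obtain ⟨c, hc, hdom⟩ := exists_pos_const B ρ hρ hρtr hfaith
  set R : ℝ := (d : ℝ) / c + 2 with hRdef
  have hdc : 0 ≤ (d : ℝ) / c := div_nonneg (Nat.cast_nonneg d) hc.le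
  refine ⟨R, by rw [hRdef]; linarith, ?_⟩
  intro m M hM hblk
  set blk : Fin m → Fin m → Matrix (Fin d) (Fin d) ℂ :=
    fun p q => Matrix.of fun a b => M (p, a) (q, b) with hblkdef
  have hblkT : ∀ p q, (blk p q)ᴴ = blk q p := by
    intro p q
    ext a b
    rw [Matrix.conjTranspose_apply]
    exact hM.1.apply (q, a) (p, b)
  have htrconj : ∀ p q, star ((ρ * blk p q).trace) = (ρ * blk q p).trace := by
    intro p q
    rw [← Matrix.trace_conjTranspose, Matrix.conjTranspose_mul, hρ.1, hblkT,
      Matrix.trace_mul_comm]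
  set Ψ : Matrix (Fin d) (Fin d) ℂ → Matrix (Fin d) (Fin d) ℂ :=
    fun b => (R : ℂ) • (((ρ * b).trace) • (1 : Matrix (Fin d) (Fin d) ℂ)) - b with hΨdef
  have hGentry : ∀ u v : Fin m × Fin d, (ampl Ψ M) u v
      = (R : ℂ) * (((ρ * blk u.1 v.1).trace) * (if u.2 = v.2 then 1 else 0)) - M u v := by
    rintro ⟨p, a⟩ ⟨q, b⟩
    simp [ampl, Ψ, blk, Matrix.sub_apply, Matrix.smul_apply, Matrix.one_apply, smul_eq_mul]
  refine Matrix.PosSemidef.of_dotProduct_mulVec_nonneg ?_ ?_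
  · -- Hermitian
    ext u v
    rw [Matrix.conjTranspose_apply, hGentry, hGentry]
    have hstarite : star (if v.2 = u.2 then (1:ℂ) else 0) = (if u.2 = v.2 then (1:ℂ) else 0) := by
      by_cases h : u.2 = v.2
      · rw [if_pos h.symm, if_pos h, star_one]
      · rw [if_neg (fun hh => h hh.symm), if_neg h, star_zero]
    rw [star_sub, star_mul', star_mul', hstarite, htrconj,
      show star ((R:ℂ)) = (R:ℂ) from Complex.conj_ofReal _, hM.1.apply u v]
  · -- quadratic form
    intro y
    set E : Fin d → (Fin m × Fin d → ℂ) := fun a u => if u.2 = a then y u else 0 with hEdef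
    set Bq : Fin d → Fin d → ℂ :=
      fun a b => ∑ p, ∑ q, star (y (p, a)) * (M (p, a) (q, b) * y (q, b)) with hBqdef
    set V : Fin d → Matrix (Fin m × Fin d) (Fin d) ℂ :=
      fun a => Matrix.of fun u j => y (u.1, a) * (if u.2 = j then 1 else 0) with hVdef
    set C : Fin d → Matrix (Fin d) (Fin d) ℂ :=
      fun a => ∑ p, ∑ q, (star (y (p, a)) * y (q, a)) • blk p q with hCdef
    have hCV : ∀ a, C a = (V a)ᴴ * M * (V a) := by
      intro a
      rw [Matrix.mul_assoc]
      ext i j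
      have hMV : ∀ u : Fin m × Fin d, (M * V a) u j = ∑ q, M u (q, j) * y (q, a) := by
        intro u
        rw [Matrix.mul_apply, Fintype.sum_prod_type]
        refine Finset.sum_congr rfl fun q _ => ?_
        simp [V, mul_ite, mul_zero, mul_one, Finset.sum_ite_eq']
      have hR : ((V a)ᴴ * (M * V a)) i j
          = ∑ p, star (y (p, a)) * ∑ q, M (p, i) (q, j) * y (q, a) := by
        rw [Matrix.mul_apply, Fintype.sum_prod_type]
        refine Finset.sum_congr rfl fun p _ => ?_
        have hVH : ∀ c2 : Fin d, ((V a)ᴴ) i (p, c2)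
            = star (y (p, a)) * (if c2 = i then 1 else 0) := by
          intro c2
          rw [Matrix.conjTranspose_apply]
          simp only [V, Matrix.of_apply, star_mul']
          by_cases h : c2 = i
          · simp [h]
          · simp [h]
        simp only [hVH, hMV]
        simp [mul_ite, ite_mul, mul_one, mul_zero, zero_mul, Finset.sum_ite_eq']
      rw [hR]
      simp only [C, Matrix.sum_apply, Matrix.smul_apply, smul_eq_mul, blk, Matrix.of_apply]
      refine Finset.sum_congr rfl fun p _ => ?_
      rw [Finset.mul_sum]
      refine Finset.sum_congr rfl fun q _ => by ring
    have hCpsd : ∀ a, (C a).PosSemidef := by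
      intro a
      rw [hCV a]
      exact hM.conjTranspose_mul_mul_same (V a)
    have hCmem : ∀ a, C a ∈ B := by
      intro a
      refine sum_mem fun p _ => sum_mem fun q _ => ?_
      exact B.smul_mem (hblk p q) _
    have hBqCaa : ∀ a, Bq a a = (C a) a a := by
      intro a
      simp only [C, Matrix.sum_apply, Matrix.smul_apply, smul_eq_mul, blk, Matrix.of_apply, Bq]
      exact Finset.sum_congr rfl fun p _ => Finset.sum_congr rfl fun q _ => by ring
    have hE1 : ∀ a b, star (E a) ⬝ᵥ (M *ᵥ E b) = Bq a b := by
      intro a b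
      have hMv : ∀ u : Fin m × Fin d, (M *ᵥ E b) u = ∑ q, M u (q, b) * y (q, b) := by
        intro u
        simp only [Matrix.mulVec, dotProduct, E]
        rw [Fintype.sum_prod_type]
        refine Finset.sum_congr rfl fun q _ => ?_
        simp [mul_ite, mul_zero, Finset.sum_ite_eq']
      rw [dotProduct]
      simp only [Pi.star_apply, hMv]
      rw [Fintype.sum_prod_type]
      have hBq : Bq a b = ∑ p, star (y (p, a)) * ∑ q, M (p, a) (q, b) * y (q, b) := by
        simp only [Bq]
        refine Finset.sum_congr rfl fun p _ => ?_
        rw [Finset.mul_sum]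
      rw [hBq]
      refine Finset.sum_congr rfl fun p _ => ?_
      simp only [E]
      simp [apply_ite (star : ℂ → ℂ), star_zero, ite_mul, zero_mul, Finset.sum_ite_eq']
    have hyE : y = ∑ a, E a := by
      funext u
      simp [E, Finset.sum_apply, Finset.sum_ite_eq]
    have hdl : ∀ (f : Fin d → (Fin m × Fin d → ℂ)) (w : Fin m × Fin d → ℂ),
        (∑ a, f a) ⬝ᵥ w = ∑ a, f a ⬝ᵥ w := by
      intro f w
      simp only [dotProduct, Finset.sum_apply, Finset.sum_mul]
      exact Finset.sum_comm
    have hdr : ∀ (u : Fin m × Fin d → ℂ) (f : Fin d → (Fin m × Fin d → ℂ)),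
        u ⬝ᵥ (∑ a, f a) = ∑ a, u ⬝ᵥ f a := by
      intro u f
      simp only [dotProduct, Finset.sum_apply, Finset.mul_sum]
      exact Finset.sum_comm
    have hQ : star y ⬝ᵥ (M *ᵥ y) = ∑ a, ∑ b, Bq a b := by
      have h1 : M *ᵥ y = ∑ b, M *ᵥ E b := by
        conv_lhs => rw [hyE]
        rw [show M *ᵥ (∑ b, E b) = M.mulVecLin (∑ b, E b) from rfl, map_sum]
        simp [Matrix.mulVecLin_apply]
      have h2 : star y = ∑ a, star (E a) := by
        conv_lhs => rw [hyE]
        exact star_sum _ _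
      rw [h1, h2, hdl]
      refine Finset.sum_congr rfl fun a _ => ?_
      rw [hdr]
      exact Finset.sum_congr rfl fun b _ => hE1 a b
    have hdiff : ∀ a b, (0:ℂ) ≤ Bq a a - Bq a b - Bq b a + Bq b b := by
      intro a b
      have h := hM.dotProduct_mulVec_nonneg (E a - E b)
      have hexp : star (E a - E b) ⬝ᵥ (M *ᵥ (E a - E b))
          = Bq a a - Bq a b - Bq b a + Bq b b := by
        rw [star_sub, Matrix.mulVec_sub, sub_dotProduct, dotProduct_sub,
          dotProduct_sub, hE1, hE1, hE1, hE1]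
        ring
      rwa [hexp] at h
    have hT : (0:ℂ) ≤ ∑ a, ∑ b, (Bq a a - Bq a b - Bq b a + Bq b b) :=
      Finset.sum_nonneg fun a _ => Finset.sum_nonneg fun b _ => hdiff a b
    have hQle : star y ⬝ᵥ (M *ᵥ y) ≤ (d:ℂ) * ∑ a, Bq a a := by
      have hsum : ∑ a, ∑ b, (Bq a a - Bq a b - Bq b a + Bq b b)
          = 2 * ((d:ℂ) * ∑ a, Bq a a) - 2 * (star y ⬝ᵥ (M *ᵥ y)) := by
        rw [hQ]
        have h1 : ∑ a, ∑ _b : Fin d, Bq a a = (d:ℂ) * ∑ a, Bq a a := by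
          simp only [Finset.sum_const, Finset.card_univ, Fintype.card_fin, nsmul_eq_mul]
          rw [Finset.mul_sum]
        have h2 : ∑ a : Fin d, ∑ b : Fin d, Bq b b = (d:ℂ) * ∑ a, Bq a a := by
          rw [Finset.sum_comm]
          simp only [Finset.sum_const, Finset.card_univ, Fintype.card_fin, nsmul_eq_mul]
          rw [Finset.mul_sum]
        have h3 : ∑ a : Fin d, ∑ b : Fin d, Bq b a = ∑ a, ∑ b, Bq a b := Finset.sum_comm
        simp only [Finset.sum_add_distrib, Finset.sum_sub_distrib]
        rw [h1, h2, h3]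
        ring
      have h0 : (0:ℂ) ≤ 2 * ((d:ℂ) * ∑ a, Bq a a - star y ⬝ᵥ (M *ᵥ y)) := by
        have h := hT
        rw [hsum] at h
        calc (0:ℂ) ≤ 2 * ((d:ℂ) * ∑ a, Bq a a) - 2 * (star y ⬝ᵥ (M *ᵥ y)) := h
          _ = 2 * ((d:ℂ) * ∑ a, Bq a a - star y ⬝ᵥ (M *ᵥ y)) := by ring
      have h12 : (0:ℂ) ≤ (2:ℂ)⁻¹ := by
        rw [Complex.le_def]
        norm_num
      have h13 := mul_nonneg h12 h0
      rw [← mul_assoc, inv_mul_cancel₀ (two_ne_zero), one_mul] at h13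
      exact sub_nonneg.mp h13
    have hBqle : ∀ a, Bq a a ≤ (C a).trace := by
      intro a
      rw [hBqCaa]
      exact entry_le_trace (hCpsd a) a
    have hdom' : ∀ a, (c:ℂ) * (C a).trace ≤ (ρ * C a).trace :=
      fun a => hdom (C a) (hCmem a) (hCpsd a)
    have htrC : ∀ a, (0:ℂ) ≤ (C a).trace := fun a => trace_nonneg' (hCpsd a)
    have hS : (0:ℂ) ≤ ∑ a, (ρ * C a).trace :=
      Finset.sum_nonneg fun a _ => le_trans
        (mul_nonneg (Complex.zero_le_real.mpr hc.le) (htrC a)) (hdom' a)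
    have htrace_eq : ∀ a, (ρ * C a).trace
        = ∑ p, ∑ q, (star (y (p, a)) * y (q, a)) * (ρ * blk p q).trace := by
      intro a
      simp only [C, Matrix.mul_sum, Matrix.trace_sum, Matrix.mul_smul, Matrix.trace_smul,
        smul_eq_mul]
    have hGquad : star y ⬝ᵥ ((ampl Ψ M) *ᵥ y)
        = (R:ℂ) * (∑ a, (ρ * C a).trace) - star y ⬝ᵥ (M *ᵥ y) := by
      have hlhs : star y ⬝ᵥ ((ampl Ψ M) *ᵥ y)
          = ∑ u : Fin m × Fin d, star (y u) * ∑ v : Fin m × Fin d,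
              (((R : ℂ) * (((ρ * blk u.1 v.1).trace) * (if u.2 = v.2 then 1 else 0)) - M u v) * y v) := by
        simp only [dotProduct, Matrix.mulVec, Pi.star_apply]
        refine Finset.sum_congr rfl fun u _ => ?_
        exact congrArg (fun z => star (y u) * z)
          (Finset.sum_congr rfl fun v _ => by rw [hGentry])
      rw [hlhs]
      have hsplit : ∀ u : Fin m × Fin d, star (y u) * ∑ v : Fin m × Fin d,
            (((R : ℂ) * (((ρ * blk u.1 v.1).trace) * (if u.2 = v.2 then 1 else 0)) - M u v) * y v)
          = (∑ v : Fin m × Fin d, star (y u) * ((R : ℂ) * (((ρ * blk u.1 v.1).trace)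
              * (if u.2 = v.2 then 1 else 0)) * y v))
            - star (y u) * ∑ v : Fin m × Fin d, M u v * y v := by
        intro u
        rw [← Finset.mul_sum, ← mul_sub, ← Finset.sum_sub_distrib]
        congr 1
        refine Finset.sum_congr rfl fun v _ => by ring
      simp only [hsplit]
      rw [Finset.sum_sub_distrib]
      have hq2 : ∑ u : Fin m × Fin d, star (y u) * ∑ v : Fin m × Fin d, M u v * y v
          = star y ⬝ᵥ (M *ᵥ y) := by
        simp only [dotProduct, Matrix.mulVec, Pi.star_apply]
      rw [hq2]
      congr 1
      · -- first part equals R * S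
        have hrhs : (R:ℂ) * (∑ a, (ρ * C a).trace)
            = ∑ a, ∑ p, ∑ q, (R:ℂ) * ((star (y (p, a)) * y (q, a)) * (ρ * blk p q).trace) := by
          rw [Finset.mul_sum]
          refine Finset.sum_congr rfl fun a _ => ?_
          rw [htrace_eq, Finset.mul_sum]
          refine Finset.sum_congr rfl fun p _ => ?_
          rw [Finset.mul_sum]
        rw [hrhs]
        have hlhs2 : ∑ u : Fin m × Fin d, ∑ v : Fin m × Fin d,
              star (y u) * ((R : ℂ) * (((ρ * blk u.1 v.1).trace) * (if u.2 = v.2 then 1 else 0)) * y v)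
            = ∑ p, ∑ a, ∑ q, (R:ℂ) * ((star (y (p, a)) * y (q, a)) * (ρ * blk p q).trace) := by
          rw [Fintype.sum_prod_type]
          refine Finset.sum_congr rfl fun p _ => Finset.sum_congr rfl fun a _ => ?_
          rw [Fintype.sum_prod_type]
          refine Finset.sum_congr rfl fun q _ => ?_
          rw [Finset.sum_eq_single a]
          · simp only [eq_self_iff_true, if_true, mul_one]
            ring
          · intro b _ hba
            have hne : ¬ (a = b) := fun h => hba h.symm
            simp [hne]
          · intro h
            exact absurd (Finset.mem_univ a) h
        rw [hlhs2]
        rw [Finset.sum_comm]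
    rw [hGquad]
    have hd0 : (0:ℂ) ≤ (d:ℂ) := by
      rw [Complex.le_def]
      simp
    have hta : ∀ a, (C a).trace ≤ ((c⁻¹:ℝ):ℂ) * (ρ * C a).trace := by
      intro a
      have h := mul_le_mul_of_nonneg_left (hdom' a)
        (Complex.zero_le_real.mpr (inv_nonneg.mpr hc.le))
      rw [← mul_assoc, ← Complex.ofReal_mul, inv_mul_cancel₀ hc.ne', Complex.ofReal_one,
        one_mul] at h
      exact h
    have hfinal : star y ⬝ᵥ (M *ᵥ y) ≤ (R:ℂ) * ∑ a, (ρ * C a).trace := by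
      calc star y ⬝ᵥ (M *ᵥ y) ≤ (d:ℂ) * ∑ a, Bq a a := hQle
        _ ≤ (d:ℂ) * ∑ a, (C a).trace := by
            exact mul_le_mul_of_nonneg_left (Finset.sum_le_sum fun a _ => hBqle a) hd0
        _ ≤ (d:ℂ) * ∑ a, ((c⁻¹:ℝ):ℂ) * (ρ * C a).trace := by
            exact mul_le_mul_of_nonneg_left (Finset.sum_le_sum fun a _ => hta a) hd0
        _ = (((d:ℝ) * c⁻¹ : ℝ) : ℂ) * ∑ a, (ρ * C a).trace := by
            rw [← Finset.mul_sum, ← mul_assoc]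
            push_cast
            ring
        _ ≤ (R:ℂ) * ∑ a, (ρ * C a).trace := by
            refine mul_le_mul_of_nonneg_right ?_ hS
            rw [Complex.real_le_real]
            rw [hRdef, div_eq_mul_inv]
            linarith
    exact sub_nonneg.mpr hfinal

end QHT
end
end

section
/- Let ρ and σ be faithful states on a finite-dimensional complex Hilbert space H. For any L > 0 there exists a test T with 0 ≤ T ≤ I such that Tr[ρ(I−T)] ≤ μ_{σ|ρ}([−log L, ∞)) and Tr[σ T] ≤ L^{−1}, where μ_{σ|ρ}([−log L, ∞)) = Σ Tr[P_μ(σ) ρ^{1/2} P_λ(ρ) ρ^{1/2}], the sum running over eigenvalues λ of ρ and μ of σ with log μ − log λ ≥ −log L. -/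
open Matrix MeasureTheory
open scoped ComplexOrder

noncomputable section

namespace QHT

variable {ι : Type*} [Fintype ι] [DecidableEq ι]

section SpectralTestAux

variable {κ : Type*} [Fintype κ] [DecidableEq κ]

private lemma outer_mulVec_aux (x z : κ → ℂ) :
    (Matrix.of fun a b => x a * star (x b)) *ᵥ z = (star x ⬝ᵥ z) • x := by
  funext a
  simp only [Matrix.mulVec, dotProduct, Matrix.of_apply, Pi.smul_apply, Pi.star_apply,
    smul_eq_mul, Finset.sum_mul]
  exact Finset.sum_congr rfl fun b _ => by ring

private lemma trace_mul_outer_aux (A : Matrix κ κ ℂ) (x : κ → ℂ) :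
    (A * Matrix.of fun a b => x a * star (x b)).trace = star x ⬝ᵥ (A *ᵥ x) := by
  simp only [Matrix.trace, Matrix.diag, Matrix.mul_apply, Matrix.of_apply, dotProduct,
    Matrix.mulVec, Pi.star_apply, Finset.mul_sum]
  exact Finset.sum_congr rfl fun a _ => Finset.sum_congr rfl fun b _ => by ring

private lemma outer_mul_outer_aux (x y : κ → ℂ) :
    (Matrix.of fun a b => x a * star (x b)) * (Matrix.of fun a b => y a * star (y b)) =
      (star x ⬝ᵥ y) • Matrix.of fun a b => x a * star (y b) := by
  ext a b
  simp only [Matrix.mul_apply, Matrix.of_apply, Matrix.smul_apply, dotProduct,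
    Pi.star_apply, smul_eq_mul, Finset.sum_mul]
  exact Finset.sum_congr rfl fun c _ => by ring

private lemma sum_mulVec_aux {n : Type*} [Fintype n] (A : n → Matrix κ κ ℂ) (x : κ → ℂ) :
    (∑ k, A k) *ᵥ x = ∑ k, A k *ᵥ x := by
  funext a
  simp [Matrix.mulVec, dotProduct, Matrix.sum_apply, Finset.sum_mul, Finset.sum_apply]
  exact Finset.sum_comm

private lemma trace_eigen_expand {A : Matrix κ κ ℂ} (hA : A.IsHermitian) (S : Matrix κ κ ℂ) :
    (A * S).trace =
      ∑ i, ((hA.eigenvalues i : ℝ) : ℂ) *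
        (star ⇑(hA.eigenvectorBasis i) ⬝ᵥ (S *ᵥ ⇑(hA.eigenvectorBasis i))) := by
  set U : Matrix κ κ ℂ := (hA.eigenvectorUnitary : Matrix κ κ ℂ) with hU
  have hentry : ∀ i, (star U * S * U) i i
      = star ⇑(hA.eigenvectorBasis i) ⬝ᵥ (S *ᵥ ⇑(hA.eigenvectorBasis i)) := by
    intro i
    simp only [Matrix.mul_apply, Matrix.star_apply, dotProduct, Matrix.mulVec,
      hU, Matrix.IsHermitian.eigenvectorUnitary_apply, Pi.star_apply, Finset.sum_mul,
      Finset.mul_sum]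
    rw [Finset.sum_comm]
    exact Finset.sum_congr rfl fun a _ => Finset.sum_congr rfl fun b _ => by ring
  conv_lhs => rw [hA.spectral_theorem, Unitary.conjStarAlgAut_apply]
  rw [Matrix.mul_assoc (U * _) (star U) S, Matrix.trace_mul_comm, ← Matrix.mul_assoc]
  simp only [Matrix.trace, Matrix.diag, Matrix.mul_diagonal]
  refine Finset.sum_congr rfl fun i _ => ?_
  rw [hentry i]
  exact mul_comm _ _

private lemma eigProj_eq {A : Matrix κ κ ℂ} (hA : A.IsHermitian) (i : κ) :
    QHT.eigProj hA i = (hA.eigenvectorUnitary : Matrix κ κ ℂ) *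
      Matrix.diagonal (Pi.single i (1:ℂ)) * star (hA.eigenvectorUnitary : Matrix κ κ ℂ) := by
  ext a b
  have h : ((hA.eigenvectorUnitary : Matrix κ κ ℂ) * Matrix.diagonal (Pi.single i (1:ℂ)) *
      star (hA.eigenvectorUnitary : Matrix κ κ ℂ)) a b
      = ∑ k, (hA.eigenvectorUnitary : Matrix κ κ ℂ) a k * (Pi.single i (1:ℂ) : κ → ℂ) k *
          star ((hA.eigenvectorUnitary : Matrix κ κ ℂ) b k) := by
    rw [Matrix.mul_apply]
    exact Finset.sum_congr rfl fun k _ => by rw [Matrix.mul_diagonal, Matrix.star_apply]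
  rw [h, Finset.sum_eq_single i]
  · simp [QHT.eigProj]
  · intro k _ hk; simp [Pi.single_apply, hk]
  · intro h'; exact absurd (Finset.mem_univ i) h'

end SpectralTestAux

section SpectralTestAux2

variable {κ : Type*} [Fintype κ] [DecidableEq κ]

private lemma matSqrt_eq {A : Matrix κ κ ℂ} (hA : A.IsHermitian) :
    matSqrt A = (hA.eigenvectorUnitary : Matrix κ κ ℂ) *
      Matrix.diagonal (fun k => ((Real.sqrt (hA.eigenvalues k) : ℝ) : ℂ)) *
      star (hA.eigenvectorUnitary : Matrix κ κ ℂ) := by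
  rw [matSqrt, matFun, dif_pos hA]

private lemma matSqrt_mul_eigProj {A : Matrix κ κ ℂ} (hA : A.IsHermitian) (i : κ) :
    matSqrt A * eigProj hA i
      = ((Real.sqrt (hA.eigenvalues i) : ℝ) : ℂ) • eigProj hA i := by
  set U : Matrix κ κ ℂ := (hA.eigenvectorUnitary : Matrix κ κ ℂ) with hU
  have hUU : star U * U = 1 := Unitary.coe_star_mul_self _
  have hcancel : ∀ M : Matrix κ κ ℂ, star U * (U * M) = M := fun M => by
    rw [← Matrix.mul_assoc, hUU, Matrix.one_mul]
  have hdd : (fun k => ((Real.sqrt (hA.eigenvalues k) : ℝ) : ℂ) * (Pi.single i (1:ℂ) : κ → ℂ) k)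
      = ((Real.sqrt (hA.eigenvalues i) : ℝ) : ℂ) • (Pi.single i 1 : κ → ℂ) := by
    funext k
    by_cases h : k = i
    · subst h; simp
    · simp [Pi.single_apply, h]
  rw [matSqrt_eq hA, eigProj_eq hA]
  simp only [← hU, Matrix.mul_assoc, hcancel]
  rw [← Matrix.mul_assoc (Matrix.diagonal _) (Matrix.diagonal _) (star U),
    Matrix.diagonal_mul_diagonal, hdd, Matrix.diagonal_smul, Matrix.smul_mul, Matrix.mul_smul]

private lemma eigProj_mul_matSqrt {A : Matrix κ κ ℂ} (hA : A.IsHermitian) (i : κ) :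
    eigProj hA i * matSqrt A
      = ((Real.sqrt (hA.eigenvalues i) : ℝ) : ℂ) • eigProj hA i := by
  set U : Matrix κ κ ℂ := (hA.eigenvectorUnitary : Matrix κ κ ℂ) with hU
  have hUU : star U * U = 1 := Unitary.coe_star_mul_self _
  have hcancel : ∀ M : Matrix κ κ ℂ, star U * (U * M) = M := fun M => by
    rw [← Matrix.mul_assoc, hUU, Matrix.one_mul]
  have hdd : (fun k => (Pi.single i (1:ℂ) : κ → ℂ) k * ((Real.sqrt (hA.eigenvalues k) : ℝ) : ℂ))
      = ((Real.sqrt (hA.eigenvalues i) : ℝ) : ℂ) • (Pi.single i 1 : κ → ℂ) := by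
    funext k
    by_cases h : k = i
    · subst h; simp [mul_comm]
    · simp [Pi.single_apply, h]
  rw [matSqrt_eq hA, eigProj_eq hA]
  simp only [← hU, Matrix.mul_assoc, hcancel]
  rw [← Matrix.mul_assoc (Matrix.diagonal _) (Matrix.diagonal _) (star U),
    Matrix.diagonal_mul_diagonal, hdd, Matrix.diagonal_smul, Matrix.smul_mul, Matrix.mul_smul]

private lemma trace_eigProj_mul_eigProj {A B : Matrix κ κ ℂ} (hA : A.IsHermitian)
    (hB : B.IsHermitian) (i j : κ) :
    (eigProj hB j * eigProj hA i).trace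
      = (star ⇑(hB.eigenvectorBasis j) ⬝ᵥ ⇑(hA.eigenvectorBasis i)) *
        star (star ⇑(hB.eigenvectorBasis j) ⬝ᵥ ⇑(hA.eigenvectorBasis i)) := by
  simp only [Matrix.trace, Matrix.diag, Matrix.mul_apply, eigProj, Matrix.of_apply,
    Matrix.IsHermitian.eigenvectorUnitary_apply, dotProduct, Pi.star_apply,
    star_sum, star_mul', star_star, Finset.sum_mul, Finset.mul_sum]
  exact Finset.sum_congr rfl fun a _ => Finset.sum_congr rfl fun b _ => by ring

private lemma trace_term_eq {A B : Matrix κ κ ℂ} (hA : A.IsHermitian) (hB : B.IsHermitian)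
    (i j : κ) (hnn : 0 ≤ hA.eigenvalues i) :
    ((eigProj hB j * matSqrt A * eigProj hA i * matSqrt A).trace).re
      = hA.eigenvalues i *
        Complex.normSq (star ⇑(hB.eigenvectorBasis j) ⬝ᵥ ⇑(hA.eigenvectorBasis i)) := by
  have h1 : eigProj hB j * matSqrt A * eigProj hA i * matSqrt A
      = ((hA.eigenvalues i : ℝ) : ℂ) • (eigProj hB j * eigProj hA i) := by
    rw [Matrix.mul_assoc (eigProj hB j) (matSqrt A) (eigProj hA i), matSqrt_mul_eigProj hA i,
      Matrix.mul_smul, Matrix.smul_mul, Matrix.mul_assoc (eigProj hB j) (eigProj hA i) (matSqrt A),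
      eigProj_mul_matSqrt hA i, Matrix.mul_smul, smul_smul, ← Complex.ofReal_mul,
      Real.mul_self_sqrt hnn]
  rw [h1, Matrix.trace_smul, trace_eigProj_mul_eigProj hA hB i j, smul_eq_mul,
    Complex.star_def, Complex.mul_conj, ← Complex.ofReal_mul, Complex.ofReal_re]

end SpectralTestAux2

private lemma log_cond_aux {lam mu L : ℝ} (hl : 0 < lam) (hm : 0 < mu) (hL : 0 < L) :
    (Real.log mu - Real.log lam ∈ Set.Ici (-Real.log L)) ↔ ¬ (mu * L < lam) := by
  rw [Set.mem_Ici, not_lt, neg_le_sub_iff_le_add, ← Real.log_mul hm.ne' hL.ne',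
    Real.log_le_log_iff hl (by positivity)]

/-- **Proposition 1 (Li / Datta–Pautrat–Rouzé).** For faithful states `ρ`, `σ` and any `L > 0`
there exists a test `T` with `Tr[ρ(I-T)] ≤ μ_{σ|ρ}([-log L, ∞))` and `Tr[σ T] ≤ L⁻¹`. -/
theorem exists_test_spectral_bound
    {ι : Type*} [Fintype ι] [DecidableEq ι] (ρ σ : Matrix ι ι ℂ)
    (hρ : IsFaithfulState ρ) (hσ : IsFaithfulState σ) (L : ℝ) (hL : 0 < L) :
    ∃ T : Matrix ι ι ℂ, IsTest T ∧
      typeI ρ T ≤ specMassSet ρ σ (Set.Ici (-Real.log L)) ∧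
      typeII σ T ≤ L⁻¹ := by
  classical
  obtain ⟨hρpd, hρtr⟩ := hρ
  obtain ⟨hσpd, hσtr⟩ := hσ
  have hR : ρ.IsHermitian := hρpd.1
  have hS : σ.IsHermitian := hσpd.1
  set q : EuclideanSpace ℂ ι → (ι → ℂ) := ⇑(WithLp.equiv 2 (ι → ℂ)) with hq_def
  set lam : ι → ℝ := hR.eigenvalues with hlam_def
  set mu : ι → ℝ := hS.eigenvalues with hmu_def
  have hlam : ∀ i, 0 < lam i := fun i => hρpd.eigenvalues_pos i
  have hmu : ∀ j, 0 < mu j := fun j => hσpd.eigenvalues_pos j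
  set X : ι → EuclideanSpace ℂ ι := fun i => hR.eigenvectorBasis i with hX_def
  set Y : ι → EuclideanSpace ℂ ι := fun j => hS.eigenvectorBasis j with hY_def
  set c : ι → ι → ℂ := fun i j => (inner ℂ (Y j) (X i) : ℂ) with hc_def
  have hYo : ∀ j j', (inner ℂ (Y j) (Y j') : ℂ) = if j = j' then 1 else 0 :=
    fun j j' => orthonormal_iff_ite.mp hS.eigenvectorBasis.orthonormal j j'
  set dv : ι → ι → ℂ := fun i j => if mu j * L < lam i then c i j else 0 with hdv_def
  set dw : ι → ι → ℂ := fun i j => if mu j * L < lam i then 0 else c i j with hdw_def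
  set v : ι → EuclideanSpace ℂ ι := fun i => ∑ j, dv i j • Y j with hv_def
  set w : ι → EuclideanSpace ℂ ι := fun i => ∑ j, dw i j • Y j with hw_def
  have hsum : ∀ i, v i + w i = X i := by
    intro i
    show (∑ j, dv i j • Y j) + (∑ j, dw i j • Y j) = X i
    rw [← Finset.sum_add_distrib]
    have h1 : ∀ j ∈ (Finset.univ : Finset ι),
        dv i j • Y j + dw i j • Y j = (inner ℂ (Y j) (X i) : ℂ) • Y j := by
      intro j _
      show (if mu j * L < lam i then c i j else 0) • Y j
          + (if mu j * L < lam i then 0 else c i j) • Y j = _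
      by_cases h : mu j * L < lam i
      · rw [if_pos h, if_pos h, zero_smul, add_zero]
      · rw [if_neg h, if_neg h, zero_smul, zero_add]
    rw [Finset.sum_congr rfl h1]
    exact hS.eigenvectorBasis.sum_repr' (X i)
  -- sorting of eigenvalues of ρ
  obtain ⟨n, e, hmono⟩ : ∃ (n : ℕ) (e : Fin n ≃ ι), Monotone (lam ∘ ⇑e) :=
    ⟨Fintype.card ι,
      (Tuple.sort (lam ∘ (Fintype.equivFin ι).symm)).trans (Fintype.equivFin ι).symm,
      Tuple.monotone_sort (lam ∘ (Fintype.equivFin ι).symm)⟩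
  haveI : WellFoundedLT (Fin n) := inferInstance
  set f : Fin n → EuclideanSpace ℂ ι := fun k => v (e k) with hf_def
  set g : Fin n → EuclideanSpace ℂ ι :=
    InnerProductSpace.gramSchmidt (𝕜 := ℂ) (E := EuclideanSpace ℂ ι) (ι := Fin n) f with hg_def
  set u : Fin n → EuclideanSpace ℂ ι :=
    InnerProductSpace.gramSchmidtNormed (𝕜 := ℂ) (E := EuclideanSpace ℂ ι) (ι := Fin n) f with hu_def
  have hu_orth : ∀ k l : Fin n, k ≠ l → (inner ℂ (u k) (u l) : ℂ) = 0 := by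
    intro k l hkl
    show (inner ℂ (InnerProductSpace.gramSchmidtNormed ℂ f k) (InnerProductSpace.gramSchmidtNormed ℂ f l) : ℂ) = 0
    simp only [InnerProductSpace.gramSchmidtNormed, inner_smul_left, inner_smul_right]
    rw [InnerProductSpace.gramSchmidt_orthogonal ℂ f hkl]
    ring
  have hu_one : ∀ k : Fin n, u k ≠ 0 → (inner ℂ (u k) (u k) : ℂ) = 1 := by
    intro k hk
    rw [inner_self_eq_norm_sq_to_K, InnerProductSpace.gramSchmidtNormed_unit_length' (hu_def ▸ hk)]
    norm_num
  -- the test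
  set Ou : Fin n → Matrix ι ι ℂ :=
    fun k => Matrix.of fun a b => q (u k) a * star (q (u k) b) with hOu_def
  set T : Matrix ι ι ℂ := ∑ k, Ou k with hT_def
  have hq0 : q 0 = 0 := rfl
  have hOu_zero : ∀ k, u k = 0 → Ou k = 0 := by
    intro k hk
    show (Matrix.of fun a b => q (u k) a * star (q (u k) b)) = 0
    rw [hk, hq0]
    ext a b
    simp
  have hdot : ∀ z z' : EuclideanSpace ℂ ι, star (q z) ⬝ᵥ (q z') = (inner ℂ z z' : ℂ) :=
    fun _ _ => dotProduct_comm _ _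
  have hTherm : Tᴴ = T := by
    show (∑ k, Ou k)ᴴ = ∑ k, Ou k
    rw [Matrix.conjTranspose_sum]
    refine Finset.sum_congr rfl fun k _ => ?_
    show (Matrix.of fun a b => q (u k) a * star (q (u k) b))ᴴ
        = (Matrix.of fun a b => q (u k) a * star (q (u k) b))
    ext a b
    simp only [Matrix.conjTranspose_apply, Matrix.of_apply, star_mul', star_star]
    ring
  have hTT : T * T = T := by
    show (∑ k, Ou k) * (∑ l, Ou l) = ∑ k, Ou k
    rw [Finset.sum_mul_sum]
    refine Finset.sum_congr rfl fun k _ => ?_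
    rw [Finset.sum_eq_single k]
    · by_cases hk : u k = 0
      · rw [hOu_zero k hk, Matrix.zero_mul]
      · show (Matrix.of fun a b => q (u k) a * star (q (u k) b)) *
            (Matrix.of fun a b => q (u k) a * star (q (u k) b)) = Ou k
        rw [outer_mul_outer_aux, hdot, hu_one k hk, one_smul]
    · intro l _ hlk
      show (Matrix.of fun a b => q (u k) a * star (q (u k) b)) *
          (Matrix.of fun a b => q (u l) a * star (q (u l) b)) = 0
      rw [outer_mul_outer_aux, hdot, hu_orth k l (fun h => hlk h.symm), zero_smul]
    · intro h; exact absurd (Finset.mem_univ k) h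
  have hTpsd : T.PosSemidef := by
    have h := Matrix.posSemidef_conjTranspose_mul_self T
    rwa [hTherm, hTT] at h
  have h1Therm : (1 - T)ᴴ = 1 - T := by
    rw [Matrix.conjTranspose_sub, Matrix.conjTranspose_one, hTherm]
  have h1T1T : (1 - T) * (1 - T) = 1 - T := by
    rw [Matrix.mul_sub, Matrix.mul_one, Matrix.sub_mul, Matrix.one_mul, hTT, sub_self, sub_zero]
  have h1Tpsd : (1 - T).PosSemidef := by
    have h := Matrix.posSemidef_conjTranspose_mul_self (1 - T)
    rwa [h1Therm, h1T1T] at h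
  -- T acts as the identity on the span of the Gram-Schmidt vectors
  have hTu : ∀ m, T *ᵥ q (u m) = q (u m) := by
    intro m
    show (∑ k, Ou k) *ᵥ q (u m) = q (u m)
    rw [sum_mulVec_aux]
    by_cases hm : u m = 0
    · rw [Finset.sum_eq_zero, hm, hq0]
      intro k _
      show (Matrix.of fun a b => q (u k) a * star (q (u k) b)) *ᵥ q (u m) = 0
      rw [outer_mulVec_aux, hdot, hm, inner_zero_right, zero_smul]
    · rw [Finset.sum_eq_single m]
      · show (Matrix.of fun a b => q (u m) a * star (q (u m) b)) *ᵥ q (u m) = q (u m)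
        rw [outer_mulVec_aux, hdot, hu_one m hm, one_smul]
      · intro l _ hlm
        show (Matrix.of fun a b => q (u l) a * star (q (u l) b)) *ᵥ q (u m) = 0
        rw [outer_mulVec_aux, hdot, hu_orth l m hlm, zero_smul]
      · intro h; exact absurd (Finset.mem_univ m) h
  have hTuE : ∀ m, Matrix.toEuclideanLin T (u m) = u m := by
    intro m
    apply (WithLp.equiv 2 (ι → ℂ)).injective
    exact hTu m
  have hTspan : ∀ z ∈ Submodule.span ℂ (Set.range u), Matrix.toEuclideanLin T z = z := by
    intro z hz
    have hle : Submodule.span ℂ (Set.range u) ≤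
        LinearMap.eqLocus (Matrix.toEuclideanLin T) LinearMap.id := by
      rw [Submodule.span_le]
      rintro _ ⟨m, rfl⟩
      exact hTuE m
    exact hle hz
  have hvspan : ∀ i, v i ∈ Submodule.span ℂ (Set.range u) := by
    intro i
    have h1 : Submodule.span ℂ (Set.range u) = Submodule.span ℂ (Set.range f) := by
      rw [hu_def, InnerProductSpace.span_gramSchmidtNormed_range, InnerProductSpace.span_gramSchmidt]
    rw [h1]
    refine Submodule.subset_span ⟨e.symm i, ?_⟩
    show v (e (e.symm i)) = v i
    rw [Equiv.apply_symm_apply]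
  have hTv : ∀ i, T *ᵥ q (v i) = q (v i) := by
    intro i
    exact congrArg q (hTspan (v i) (hvspan i))
  refine ⟨T, ⟨hTpsd, h1Tpsd⟩, ?_, ?_⟩
  · -- type I bound
    have hmass : specMassSet ρ σ (Set.Ici (-Real.log L))
        = ∑ i, ∑ j, (if ¬ (mu j * L < lam i) then lam i * Complex.normSq (c i j) else 0) := by
      unfold specMassSet
      rw [dif_pos (⟨hR, hS⟩ : ρ.IsHermitian ∧ σ.IsHermitian)]
      refine Finset.sum_congr rfl fun i _ => Finset.sum_congr rfl fun j _ => ?_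
      refine if_congr ?_ ?_ rfl
      · exact log_cond_aux (hlam i) (hmu j) hL
      · exact (trace_term_eq hR hS i j (hlam i).le).trans (by rw [dotProduct_comm]; rfl)
    have hre : typeI ρ T = ∑ i, ((((hR.eigenvalues i) : ℝ) : ℂ) *
        (star ⇑(hR.eigenvectorBasis i) ⬝ᵥ ((1 - T) *ᵥ ⇑(hR.eigenvectorBasis i)))).re := by
      show ((ρ * (1 - T)).trace).re = _
      rw [trace_eigen_expand hR (1 - T), Complex.re_sum]
    rw [hre, hmass]
    refine Finset.sum_le_sum fun i _ => ?_
    have key : ((((lam i) : ℝ) : ℂ) *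
        (star (q (X i)) ⬝ᵥ ((1 - T) *ᵥ q (X i)))).re
        ≤ ∑ j, (if ¬ (mu j * L < lam i) then lam i * Complex.normSq (c i j) else 0) := by
      have hXd : q (X i) = q (v i) + q (w i) := by rw [← hsum i]; rfl
      have hv0 : (1 - T) *ᵥ q (v i) = 0 := by
        rw [Matrix.sub_mulVec, Matrix.one_mulVec, hTv i, sub_self]
      have hcross : star (q (v i)) ⬝ᵥ ((1 - T) *ᵥ q (w i)) = 0 := by
        rw [Matrix.dotProduct_mulVec]
        have h2 : star (q (v i)) ᵥ* (1 - T) = star ((1 - T) *ᵥ q (v i)) := by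
          rw [Matrix.star_mulVec, h1Therm]
        rw [h2, hv0, star_zero, zero_dotProduct]
      have hYw : ∀ j, (inner ℂ (Y j) (w i) : ℂ) = dw i j := by
        intro j
        show (inner ℂ (Y j) (∑ j', dw i j' • Y j') : ℂ) = dw i j
        rw [inner_sum]
        rw [Finset.sum_eq_single j]
        · rw [inner_smul_right, hYo j j, if_pos rfl, mul_one]
        · intro j' _ hj'
          rw [inner_smul_right, hYo j j', if_neg (fun h => hj' h.symm), mul_zero]
        · intro h; exact absurd (Finset.mem_univ j) h
      have hww : (star (q (w i)) ⬝ᵥ q (w i)).re = ∑ j, Complex.normSq (dw i j) := by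
        rw [hdot]
        have h2 : (inner ℂ (w i) (w i) : ℂ) = ∑ j, (inner ℂ (w i) (dw i j • Y j) : ℂ) := by
          exact inner_sum Finset.univ (fun j => dw i j • Y j) (w i)
        have h3 : ∀ j ∈ (Finset.univ : Finset ι), (inner ℂ (w i) (dw i j • Y j) : ℂ)
            = ((Complex.normSq (dw i j) : ℝ) : ℂ) := by
          intro j _
          rw [inner_smul_right, ← inner_conj_symm, hYw j, Complex.mul_conj]
        rw [h2, Finset.sum_congr rfl h3, ← Complex.ofReal_sum, Complex.ofReal_re]
      have hTw : 0 ≤ (star (q (w i)) ⬝ᵥ (T *ᵥ q (w i))).re := hTpsd.re_dotProduct_nonneg (q (w i))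
      have hQ : (star (q (X i)) ⬝ᵥ ((1 - T) *ᵥ q (X i))).re ≤ ∑ j, Complex.normSq (dw i j) := by
        have hsplit : (1 - T) *ᵥ q (X i) = (1 - T) *ᵥ q (w i) := by
          rw [hXd, Matrix.mulVec_add, hv0, zero_add]
        rw [hsplit, hXd, star_add, add_dotProduct, hcross, zero_add]
        rw [Matrix.sub_mulVec, Matrix.one_mulVec, dotProduct_sub, Complex.sub_re]
        rw [hww] at *
        linarith [hww]
      calc ((((lam i) : ℝ) : ℂ) * (star (q (X i)) ⬝ᵥ ((1 - T) *ᵥ q (X i)))).re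
          = lam i * (star (q (X i)) ⬝ᵥ ((1 - T) *ᵥ q (X i))).re := Complex.re_ofReal_mul _ _
        _ ≤ lam i * ∑ j, Complex.normSq (dw i j) :=
            mul_le_mul_of_nonneg_left hQ (hlam i).le
        _ = ∑ j, (if ¬ (mu j * L < lam i) then lam i * Complex.normSq (c i j) else 0) := by
            rw [Finset.mul_sum]
            refine Finset.sum_congr rfl fun j _ => ?_
            show lam i * Complex.normSq (if mu j * L < lam i then 0 else c i j) = _
            by_cases h : mu j * L < lam i
            · rw [if_pos h, if_neg (fun h' => h' h)]
              simp
            · rw [if_neg h, if_pos h]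
    exact key
  · -- type II bound
    have hlamsum : ∑ i, lam i = 1 := by
      have h1 : ρ.trace = ∑ i, ((lam i : ℝ) : ℂ) := by
        conv_lhs => rw [hR.spectral_theorem, Unitary.conjStarAlgAut_apply]
        rw [Matrix.trace_mul_cycle, Unitary.coe_star_mul_self, Matrix.one_mul,
          Matrix.trace_diagonal]
        exact Finset.sum_congr rfl fun i _ => rfl
      have h2 : ((∑ i, lam i : ℝ) : ℂ) = 1 := by
        rw [Complex.ofReal_sum, ← h1, hρtr]
      exact_mod_cast h2
  -- quadratic-form bound for σ on spectral subspaces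
    have hlin : ∀ z : EuclideanSpace ℂ ι,
        star (q z) ⬝ᵥ (σ *ᵥ q z) = (inner ℂ z (Matrix.toEuclideanLin σ z) : ℂ) := fun _ => dotProduct_comm _ _
    have hYeig : ∀ j, Matrix.toEuclideanLin σ (Y j) = (mu j : ℂ) • Y j := by
      intro j
      have h1 := hS.mulVec_eigenvectorBasis j
      apply (WithLp.equiv 2 (ι → ℂ)).injective
      show σ *ᵥ q (Y j) = q ((mu j : ℂ) • Y j)
      funext a
      calc (σ *ᵥ q (Y j)) a = mu j • (q (Y j) a) := congrFun h1 a
        _ = (mu j : ℂ) * q (Y j) a := Complex.real_smul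
        _ = q ((mu j : ℂ) • Y j) a := rfl
    have hquad : ∀ (k : Fin n) (z : EuclideanSpace ℂ ι),
        z ∈ Submodule.span ℂ (Y '' {j | mu j * L < lam (e k)}) →
        (star (q z) ⬝ᵥ (σ *ᵥ q z)).re ≤ (lam (e k) / L) * (inner ℂ z z : ℂ).re := by
      intro k z hz
      have ha0 : ∀ j, ¬ (mu j * L < lam (e k)) → (inner ℂ (Y j) z : ℂ) = 0 := by
        intro j hj
        induction hz using Submodule.span_induction with
        | mem x hx =>
            obtain ⟨j', hj', rfl⟩ := hx
            rw [hYo j j']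
            rw [if_neg]
            rintro rfl
            exact hj hj'
        | zero => exact inner_zero_right _
        | add x y _ _ hx hy => rw [inner_add_right, hx, hy, add_zero]
        | smul t x _ hx => rw [inner_smul_right, hx, mul_zero]
      have hrepr : z = ∑ j, (inner ℂ (Y j) z : ℂ) • Y j := (hS.eigenvectorBasis.sum_repr' z).symm
      have hmap : Matrix.toEuclideanLin σ z
          = ∑ j, ((inner ℂ (Y j) z : ℂ) * (mu j : ℂ)) • Y j := by
        conv_lhs => rw [hrepr]
        rw [_root_.map_sum]
        refine Finset.sum_congr rfl fun j _ => ?_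
        rw [_root_.map_smul, hYeig j, smul_smul]
      have hz2 : (inner ℂ z (Matrix.toEuclideanLin σ z) : ℂ)
          = ∑ j, (mu j : ℂ) * ((inner ℂ (Y j) z : ℂ) * (starRingEnd ℂ) (inner ℂ (Y j) z : ℂ)) := by
        calc (inner ℂ z (Matrix.toEuclideanLin σ z) : ℂ)
            = ∑ j, (inner ℂ z (((inner ℂ (Y j) z : ℂ) * (mu j : ℂ)) • Y j) : ℂ) := by
              rw [hmap, inner_sum]
          _ = ∑ j, (mu j : ℂ) * ((inner ℂ (Y j) z : ℂ) * (starRingEnd ℂ) (inner ℂ (Y j) z : ℂ)) := by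
              refine Finset.sum_congr rfl fun j _ => ?_
              rw [inner_smul_right, ← inner_conj_symm z (Y j)]
              ring
      have hz3 : (inner ℂ z z : ℂ)
          = ∑ j, ((inner ℂ (Y j) z : ℂ) * (starRingEnd ℂ) (inner ℂ (Y j) z : ℂ)) := by
        calc (inner ℂ z z : ℂ)
            = (inner ℂ z (∑ j, (inner ℂ (Y j) z : ℂ) • Y j) : ℂ) := by
              exact congrArg (fun t => (inner ℂ z t : ℂ)) hrepr
          _ = ∑ j, (inner ℂ z ((inner ℂ (Y j) z : ℂ) • Y j) : ℂ) := inner_sum _ _ _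
          _ = ∑ j, ((inner ℂ (Y j) z : ℂ) * (starRingEnd ℂ) (inner ℂ (Y j) z : ℂ)) := by
              refine Finset.sum_congr rfl fun j _ => ?_
              rw [inner_smul_right, ← inner_conj_symm z (Y j)]
      have hre2 : (star (q z) ⬝ᵥ (σ *ᵥ q z)).re
          = ∑ j, mu j * Complex.normSq (inner ℂ (Y j) z : ℂ) := by
        rw [hlin z, hz2, Complex.re_sum]
        refine Finset.sum_congr rfl fun j _ => ?_
        rw [Complex.mul_conj, ← Complex.ofReal_mul, Complex.ofReal_re]
      have hre3 : (inner ℂ z z : ℂ).re = ∑ j, Complex.normSq (inner ℂ (Y j) z : ℂ) := by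
        rw [hz3, Complex.re_sum]
        refine Finset.sum_congr rfl fun j _ => ?_
        rw [Complex.mul_conj, Complex.ofReal_re]
      rw [hre2, hre3, Finset.mul_sum]
      refine Finset.sum_le_sum fun j _ => ?_
      by_cases h : mu j * L < lam (e k)
      · exact mul_le_mul_of_nonneg_right (le_of_lt ((lt_div_iff₀ hL).mpr h))
          (Complex.normSq_nonneg _)
      · rw [ha0 j h]
        simp
    have humem : ∀ k, u k ∈ Submodule.span ℂ (Y '' {j | mu j * L < lam (e k)}) := by
      intro k
      have hgk : g k ∈ Submodule.span ℂ (f '' Set.Iic k) :=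
        InnerProductSpace.gramSchmidt_mem_span ℂ f le_rfl
      have hle : Submodule.span ℂ (f '' Set.Iic k)
          ≤ Submodule.span ℂ (Y '' {j | mu j * L < lam (e k)}) := by
        rw [Submodule.span_le]
        rintro _ ⟨m, hm, rfl⟩
        have hml : lam (e m) ≤ lam (e k) := hmono hm
        show (∑ j, dv (e m) j • Y j) ∈ _
        refine Submodule.sum_mem _ fun j _ => ?_
        by_cases h : mu j * L < lam (e m)
        · exact Submodule.smul_mem _ _
            (Submodule.subset_span ⟨j, lt_of_lt_of_le h hml, rfl⟩)
        · show (if mu j * L < lam (e m) then c (e m) j else 0) • Y j ∈ _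
          rw [if_neg h, zero_smul]
          exact Submodule.zero_mem _
      have h2 := hle hgk
      show ((‖InnerProductSpace.gramSchmidt ℂ f k‖ : ℂ))⁻¹ • InnerProductSpace.gramSchmidt ℂ f k ∈ _
      exact Submodule.smul_mem _ _ h2
    have hnorm1 : ∀ k, (inner ℂ (u k) (u k) : ℂ).re ≤ 1 := by
      intro k
      by_cases hk : u k = 0
      · rw [hk, inner_zero_left]
        simp
      · rw [hu_one k hk]
        simp
    have hbound : ∀ k, (star (q (u k)) ⬝ᵥ (σ *ᵥ q (u k))).re ≤ lam (e k) / L := by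
      intro k
      have h1 := hquad k (u k) (humem k)
      have hB : 0 ≤ lam (e k) / L := div_nonneg (hlam _).le hL.le
      have h2 : (lam (e k) / L) * (inner ℂ (u k) (u k) : ℂ).re ≤ lam (e k) / L := by
        calc (lam (e k) / L) * (inner ℂ (u k) (u k) : ℂ).re ≤ (lam (e k) / L) * 1 :=
            mul_le_mul_of_nonneg_left (hnorm1 k) hB
          _ = lam (e k) / L := mul_one _
      exact h1.trans h2
    have htII : typeII σ T = ∑ k, (star (q (u k)) ⬝ᵥ (σ *ᵥ q (u k))).re := by
      show ((σ * T).trace).re = _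
      have h1 : σ * T = ∑ k, σ * Ou k := by
        show σ * (∑ k, Ou k) = _
        rw [Finset.mul_sum]
      rw [h1, Matrix.trace_sum, Complex.re_sum]
      refine Finset.sum_congr rfl fun k _ => ?_
      congr 1
      exact trace_mul_outer_aux σ (q (u k))
    rw [htII]
    calc ∑ k, (star (q (u k)) ⬝ᵥ (σ *ᵥ q (u k))).re ≤ ∑ k, lam (e k) / L :=
        Finset.sum_le_sum fun k _ => hbound k
      _ = (∑ k, lam (e k)) / L := by rw [Finset.sum_div]
      _ = (∑ i, lam i) / L := by rw [Equiv.sum_comp e lam]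
      _ = 1 / L := by rw [hlamsum]
      _ = L⁻¹ := one_div L

end QHT
end
end
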